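/- arXiv:0810.1532 — 2 statements merged into one kernel-verified Lean document; each statement's English description precedes it below -/
import Mathlib

section
/- Fix ℓ ≥ 2 and 1 ≤ i_1 < ⋯ < i_k ≤ ℓ with i_{r+1} > i_r + 1 for all 1 ≤ r < k, and let Ψ = Ψ(i_1,…,i_k) with associated quiver Δ_Ψ on ℕ^ℓ. Let λ ∈ ℕ^ℓ and assume that λ has at least one arrow of Δ_Ψ into or out of it. Then the connected component of λ in Δ_Ψ is isomorphic, as a quiver, to Ξ_a(m), where m = (m_1,…,m_k) with m_t = λ_{i_t−1} + λ_{i_t} (with m_t = ∞ when i_t = 1) and a ∈ {0,1} is determined by a ≡ λ_{i_1} + ⋯ + λ_{i_k} (mod 2). -/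
/-- The coordinates of the type `C_ℓ` root `β_{i,j}` (`1 ≤ i ≤ j ≤ ℓ`, `1`-based positions)
with respect to the fundamental weights: the `t`-th coordinate is the multiplicity of `t` in
the multiset `{i, j}` minus its multiplicity in the multiset `{i−1, j−1}`. -/
def betaC (ℓ i j : ℕ) : Fin ℓ → ℤ := fun t =>
  (if (t : ℕ) + 1 = i then 1 else 0) + (if (t : ℕ) + 1 = j then 1 else 0)
    - (if (t : ℕ) + 2 = i then 1 else 0) - (if (t : ℕ) + 2 = j then 1 else 0)

/-- The arrow relation of the quiver `Δ_Ψ` on `ℕ^ℓ` where `Ψ` is given by a set `S` of index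
pairs `(i, j)` with `i ≤ j` : for `i < j` there is an arrow `λ ← λ + β_{i,j}` whenever
`λ_{i−1} ≥ 1` (no condition when `i = 1`) and `λ_{j−1} ≥ 1`; for `i = j` there is an
arrow `λ ← λ + β_{i,i}` whenever `λ_{i−1} ≥ 2` (no condition when `i = 1`). -/
def arrowC (ℓ : ℕ) (S : Set (ℕ × ℕ)) (lam mu : Fin ℓ → ℕ) : Prop :=
  ∃ p ∈ S, (∀ t : Fin ℓ, (mu t : ℤ) = (lam t : ℤ) + betaC ℓ p.1 p.2 t) ∧
    (if p.1 = p.2 then ∀ t : Fin ℓ, (t : ℕ) + 2 = p.1 → 2 ≤ lam t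
     else (∀ t : Fin ℓ, (t : ℕ) + 2 = p.1 → 1 ≤ lam t) ∧
       (∀ t : Fin ℓ, (t : ℕ) + 2 = p.2 → 1 ≤ lam t))

/-- The coordinate of `λ ∈ ℕ^ℓ` at the `1`-based position `pos` (and `0` out of range). -/
def coord (ℓ : ℕ) (lam : Fin ℓ → ℕ) (pos : ℕ) : ℕ :=
  if h : 1 ≤ pos ∧ pos ≤ ℓ then lam ⟨pos - 1, by omega⟩ else 0

/-- Vertices of `Ξ_a(m)` (bounds in `ℕ ∪ {∞}`). -/
def xiVert {k : ℕ} (m : Fin k → ℕ∞) (a : ℕ) (x : Fin k → ℕ) : Prop :=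
  (∀ i, (x i : ℕ∞) ≤ m i) ∧ (∑ i, x i) % 2 = a

/-- Arrows of `Ξ(m)` : `x ← x + 2e_j` when `x j + 2 ≤ m j`, and `x ← x + e_i + e_j` when
`i < j`, `x i + 1 ≤ m i` and `x j + 1 ≤ m j`. -/
def xiArrow {k : ℕ} (m : Fin k → ℕ∞) (x y : Fin k → ℕ) : Prop :=
  (∃ j, (x j : ℕ∞) + 2 ≤ m j ∧ y = x + Pi.single j 2) ∨
    (∃ i j, i < j ∧ (x i : ℕ∞) + 1 ≤ m i ∧ (x j : ℕ∞) + 1 ≤ m j ∧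
      y = x + Pi.single i 1 + Pi.single j 1)

namespace Stmt10

variable {k : ℕ} (m : Fin k → ℕ∞)
def RXi (u v : Fin k → ℕ) : Prop := xiArrow m u v ∨ xiArrow m v u

lemma sum_single (j : Fin k) (c : ℕ) : ∑ t, Pi.single j c t = c := by
  simp [Pi.single_apply]

lemma reduce : ∀ n (y : Fin k → ℕ), ∑ t, y t = n → (∀ i, (y i : ℕ∞) ≤ m i) →
    ∃ z, (∀ i, (z i : ℕ∞) ≤ m i) ∧ ∑ t, z t ≤ 1 ∧ (∑ t, z t) % 2 = (∑ t, y t) % 2 ∧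
      Relation.ReflTransGen (RXi m) y z := by
  intro n
  induction n using Nat.strong_induction_on with
  | _ n IH =>
  intro y hsum hy
  by_cases hn : n ≤ 1
  · exact ⟨y, hy, by omega, rfl, .refl⟩
  push_neg at hn
  -- find a down-move from y
  have hstep : ∃ z, (∀ t, (z t : ℕ∞) ≤ m t) ∧ ∑ t, z t + 2 = n ∧ xiArrow m z y := by
    by_cases hA : ∃ j, 2 ≤ y j
    · obtain ⟨j, hj⟩ := hA
      set z : Fin k → ℕ := fun t => if t = j then y t - 2 else y t with hzdef
      have hyz : y = z + Pi.single j 2 := by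
        funext t
        simp only [hzdef, Pi.add_apply, Pi.single_apply]
        by_cases ht : t = j <;> simp [ht] <;> omega
      have hsz : ∑ t, z t + 2 = n := by
        have : ∑ t, y t = ∑ t, z t + ∑ t, Pi.single j 2 t := by
          rw [hyz, ← Finset.sum_add_distrib]; rfl
        rw [sum_single] at this; omega
      refine ⟨z, ?_, hsz, Or.inl ⟨j, ?_, hyz⟩⟩
      · intro t
        by_cases ht : t = j <;> simp only [hzdef, if_pos, ht, if_neg]
        · exact le_trans (by exact_mod_cast Nat.sub_le _ _) (hy j)
        · simpa [ht] using hy t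
      · have h2 : (z j : ℕ∞) + 2 = ((y j : ℕ) : ℕ∞) := by
          have : z j + 2 = y j := by simp only [hzdef, if_pos rfl]; omega
          exact_mod_cast congrArg (Nat.cast : ℕ → ℕ∞) this
        rw [h2]; exact hy j
    · push_neg at hA
      have h0 : ∃ i, y i ≠ 0 := by
        by_contra hc; push_neg at hc; simp [hc] at hsum; omega
      obtain ⟨i, hi⟩ := h0
      have herase := Finset.add_sum_erase Finset.univ y (Finset.mem_univ i)
      have h1 : ∃ j ∈ Finset.univ.erase i, y j ≠ 0 := by
        by_contra hc; push_neg at hc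
        rw [Finset.sum_eq_zero hc] at herase
        have := hA i; omega
      obtain ⟨j, hjmem, hj⟩ := h1
      have hij : j ≠ i := (Finset.mem_erase.mp hjmem).1
      set z : Fin k → ℕ := fun t => if t = i then y t - 1 else if t = j then y t - 1 else y t
        with hzdef
      have hzi : z i = y i - 1 := by simp [hzdef]
      have hzj : z j = y j - 1 := by simp [hzdef, hij]
      have hyz : y = z + Pi.single i 1 + Pi.single j 1 := by
        funext t
        simp only [hzdef, Pi.add_apply, Pi.single_apply]
        by_cases hti : t = i
        · subst hti; simp [Ne.symm hij]; omega
        by_cases htj : t = j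
        · subst htj; simp [hij, hti]; omega
        · simp [hti, htj]
      have hsz : ∑ t, z t + 2 = n := by
        have : ∑ t, y t = (∑ t, z t + ∑ t, Pi.single i 1 t) + ∑ t, Pi.single j 1 t := by
          rw [hyz, ← Finset.sum_add_distrib, ← Finset.sum_add_distrib]; rfl
        rw [sum_single, sum_single] at this; omega
      have hzb : ∀ t, (z t : ℕ∞) ≤ m t := by
        intro t
        have : z t ≤ y t := by
          simp only [hzdef]
          by_cases hti : t = i
          · simp [hti]
          by_cases htj : t = j
          · simp [hti, htj]
          · simp [hti, htj]
        exact le_trans (by exact_mod_cast this) (hy t)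
      have hi1 : (z i : ℕ∞) + 1 = ((y i : ℕ) : ℕ∞) := by
        have : z i + 1 = y i := by rw [hzi]; omega
        exact_mod_cast congrArg (Nat.cast : ℕ → ℕ∞) this
      have hj1 : (z j : ℕ∞) + 1 = ((y j : ℕ) : ℕ∞) := by
        have : z j + 1 = y j := by rw [hzj]; omega
        exact_mod_cast congrArg (Nat.cast : ℕ → ℕ∞) this
      have harr : xiArrow m z y := by
        rcases lt_or_gt_of_ne (Ne.symm hij) with h | h
        · exact Or.inr ⟨i, j, h, by rw [hi1]; exact hy i, by rw [hj1]; exact hy j, hyz⟩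
        · refine Or.inr ⟨j, i, h, by rw [hj1]; exact hy j, by rw [hi1]; exact hy i, ?_⟩
          rw [hyz, add_right_comm]
      exact ⟨z, hzb, hsz, harr⟩
  obtain ⟨z, hzb, hzs, hzarr⟩ := hstep
  obtain ⟨w, hwb, hws, hwp, hwconn⟩ := IH (n-2) (by omega) z (by omega) hzb
  refine ⟨w, hwb, hws, by omega, Relation.ReflTransGen.head (Or.inr hzarr) hwconn⟩


lemma pair_up {x : Fin k → ℕ} {i j : Fin k} (hij : i ≠ j)
    (hi : (x i : ℕ∞) + 1 ≤ m i) (hj : (x j : ℕ∞) + 1 ≤ m j) :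
    xiArrow m x (x + Pi.single i 1 + Pi.single j 1) := by
  rcases lt_or_gt_of_ne hij with h | h
  · exact Or.inr ⟨i, j, h, hi, hj, rfl⟩
  · exact Or.inr ⟨j, i, h, hj, hi, by rw [add_right_comm]⟩

lemma conn_symm {u v : Fin k → ℕ} (h : Relation.ReflTransGen (RXi m) u v) :
    Relation.ReflTransGen (RXi m) v u :=
  haveI : Std.Symm (RXi m) := ⟨fun _ _ hh => hh.symm⟩
  Relation.ReflTransGen.symmetric.symm _ _ h

lemma conn1 {i r : Fin k} (hmi : (1:ℕ∞) ≤ m i) (hmr : (2:ℕ∞) ≤ m r) :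
    Relation.ReflTransGen (RXi m) (Pi.single i 1 : Fin k → ℕ) (Pi.single r 1) := by
  rcases eq_or_ne i r with rfl | hir
  · exact .refl
  have step1 : xiArrow m (Pi.single i 1 : Fin k → ℕ)
      ((Pi.single i 1 : Fin k → ℕ) + Pi.single r 2) := by
    refine Or.inl ⟨r, ?_, rfl⟩
    have h0 : (Pi.single i 1 : Fin k → ℕ) r = 0 := by
      simp [Pi.single_apply, Ne.symm hir]
    rw [h0]; simpa using hmr
  have key : (Pi.single r 1 : Fin k → ℕ) + Pi.single i 1 + Pi.single r 1
      = (Pi.single i 1 : Fin k → ℕ) + Pi.single r 2 := by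
    funext t
    simp only [Pi.add_apply, Pi.single_apply]
    split_ifs <;> omega
  have step2 : xiArrow m (Pi.single r 1 : Fin k → ℕ)
      ((Pi.single i 1 : Fin k → ℕ) + Pi.single r 2) := by
    rw [← key]
    refine pair_up m hir ?_ ?_
    · have h0 : (Pi.single r 1 : Fin k → ℕ) i = 0 := by
        simp [Pi.single_apply, hir]
      rw [h0]; simpa using hmi
    · have h0 : (Pi.single r 1 : Fin k → ℕ) r = 1 := by simp
      rw [h0]
      have : ((1:ℕ) : ℕ∞) + 1 = 2 := by norm_num
      rw [this]; exact hmr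
  exact Relation.ReflTransGen.head (Or.inl step1)
    (Relation.ReflTransGen.single (Or.inr step2))

lemma conn2 {i j r : Fin k} (hij : i ≠ j) (hri : r ≠ i) (hrj : r ≠ j)
    (hmi : (1:ℕ∞) ≤ m i) (hmj : (1:ℕ∞) ≤ m j) (hmr : (1:ℕ∞) ≤ m r) :
    Relation.ReflTransGen (RXi m) (Pi.single i 1 : Fin k → ℕ) (Pi.single j 1) := by
  have one1 : ∀ (p q : Fin k), p ≠ q → ((Pi.single p 1 : Fin k → ℕ) q : ℕ∞) + 1 = 1 := by
    intro p q hpq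
    have h0 : (Pi.single p 1 : Fin k → ℕ) q = 0 := by simp [Pi.single_apply, Ne.symm hpq]
    rw [h0]; norm_num
  have step1 : xiArrow m (Pi.single i 1 : Fin k → ℕ)
      ((Pi.single i 1 : Fin k → ℕ) + Pi.single j 1 + Pi.single r 1) := by
    refine pair_up m (Ne.symm hrj) ?_ ?_
    · rw [one1 i j hij]; exact hmj
    · rw [one1 i r (Ne.symm hri)]; exact hmr
  have key : (Pi.single j 1 : Fin k → ℕ) + Pi.single i 1 + Pi.single r 1
      = (Pi.single i 1 : Fin k → ℕ) + Pi.single j 1 + Pi.single r 1 := by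
    funext t
    simp only [Pi.add_apply, Pi.single_apply]
    split_ifs <;> omega
  have step2 : xiArrow m (Pi.single j 1 : Fin k → ℕ)
      ((Pi.single i 1 : Fin k → ℕ) + Pi.single j 1 + Pi.single r 1) := by
    rw [← key]
    refine pair_up m (Ne.symm hri) ?_ ?_
    · rw [one1 j i (Ne.symm hij)]; exact hmi
    · rw [one1 j r (Ne.symm hrj)]; exact hmr
  exact Relation.ReflTransGen.head (Or.inl step1)
    (Relation.ReflTransGen.single (Or.inr step2))

lemma sum_eq_one_single {y : Fin k → ℕ} (h : ∑ t, y t = 1) :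
    ∃ i, y = Pi.single i 1 := by
  have h0 : ∃ i, y i ≠ 0 := by
    by_contra hc; push_neg at hc; simp [hc] at h
  obtain ⟨i, hi⟩ := h0
  have hle : y i ≤ ∑ t, y t :=
    Finset.single_le_sum (fun t _ => Nat.zero_le _) (Finset.mem_univ i)
  have hyi : y i = 1 := by omega
  have herase := Finset.add_sum_erase Finset.univ y (Finset.mem_univ i)
  have hz : ∑ t ∈ Finset.univ.erase i, y t = 0 := by omega
  refine ⟨i, funext fun t => ?_⟩
  rcases eq_or_ne t i with rfl | ht
  · simp [hyi]
  · have := Finset.sum_eq_zero_iff.mp hz t (Finset.mem_erase.mpr ⟨ht, Finset.mem_univ t⟩)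
    simp [Pi.single_apply, ht, this]

lemma conn_xi (par : ℕ)
    (hex : ∃ u v : Fin k → ℕ, (∀ i, (u i : ℕ∞) ≤ m i) ∧ (∑ t, u t) % 2 = par ∧
      xiArrow m u v)
    (x y : Fin k → ℕ) (hx : ∀ i, (x i : ℕ∞) ≤ m i) (hy : ∀ i, (y i : ℕ∞) ≤ m i)
    (hpx : (∑ t, x t) % 2 = par) (hpy : (∑ t, y t) % 2 = par) :
    Relation.ReflTransGen (RXi m) x y := by
  obtain ⟨z, hzb, hz1, hzp, hzconn⟩ := reduce m (∑ t, x t) x rfl hx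
  obtain ⟨w, hwb, hw1, hwp, hwconn⟩ := reduce m (∑ t, y t) y rfl hy
  have hfin : Relation.ReflTransGen (RXi m) z w → Relation.ReflTransGen (RXi m) x y :=
    fun h => hzconn.trans (h.trans (conn_symm m hwconn))
  apply hfin
  have hzw : ∑ t, z t = ∑ t, w t := by omega
  rcases Nat.lt_or_ge (∑ t, z t) 1 with h0 | h1
  · -- both sums are zero, so z = w = 0
    have hz0 : ∀ t, z t = 0 := fun t =>
      Finset.sum_eq_zero_iff.mp (by omega) t (Finset.mem_univ t)
    have hw0 : ∀ t, w t = 0 := fun t =>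
      Finset.sum_eq_zero_iff.mp (by omega) t (Finset.mem_univ t)
    have : z = w := funext fun t => by rw [hz0 t, hw0 t]
    rw [this]
  · have hz1' : ∑ t, z t = 1 := by omega
    have hw1' : ∑ t, w t = 1 := by omega
    have hpar1 : par = 1 := by omega
    obtain ⟨i, hzi⟩ := sum_eq_one_single hz1'
    obtain ⟨j, hwj⟩ := sum_eq_one_single hw1'
    subst hzi hwj
    rcases eq_or_ne i j with rfl | hij
    · exact .refl
    have hmi : (1:ℕ∞) ≤ m i := by
      have := hzb i; simpa using this
    have hmj : (1:ℕ∞) ≤ m j := by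
      have := hwb j; simpa using this
    by_cases h2 : ∃ r, (2:ℕ∞) ≤ m r
    · obtain ⟨r, hr⟩ := h2
      exact (conn1 m hmi hr).trans (conn_symm m (conn1 m hmj hr))
    by_cases h3 : ∃ r, r ≠ i ∧ r ≠ j ∧ (1:ℕ∞) ≤ m r
    · obtain ⟨r, hri, hrj, hr⟩ := h3
      exact conn2 m hij hri hrj hmi hmj hr
    -- impossible: the existence of an arrow somewhere gives a contradiction
    exfalso
    push_neg at h2 h3
    obtain ⟨u, v, hub, hup, huv⟩ := hex
    rcases huv with ⟨p, hp, _⟩ | ⟨p, q, hpq, hp, hq, _⟩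
    · exact absurd (le_trans le_add_self hp) (not_le.mpr (h2 p))
    · have hm1 : ∀ r, r ≠ i → r ≠ j → m r = 0 := by
        intro r hri hrj
        exact ENat.lt_one_iff_eq_zero.mp (h3 r hri hrj)
      have hmem : ∀ r : Fin k, (u r : ℕ∞) + 1 ≤ m r → (r = i ∨ r = j) := by
        intro r hr
        by_contra hc
        push_neg at hc
        rw [hm1 r hc.1 hc.2] at hr
        simp at hr
      have hu0 : ∀ r, u r = 0 := by
        intro r
        rcases eq_or_ne r p with rfl | hrp
        · -- u p + 1 ≤ m p and ¬ 2 ≤ m p forces u p = 0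
          by_contra hc
          have h1p : 1 ≤ u r := Nat.one_le_iff_ne_zero.mpr hc
          have : (2:ℕ∞) ≤ m r := by
            refine le_trans ?_ hp
            have : ((2:ℕ):ℕ∞) ≤ ((u r : ℕ) : ℕ∞) + 1 := by
              have : ((2:ℕ):ℕ∞) = ((1:ℕ):ℕ∞) + 1 := by norm_num
              rw [this]
              exact add_le_add_left (by exact_mod_cast h1p) 1
            simpa using this
          exact absurd this (not_le.mpr (h2 r))
        rcases eq_or_ne r q with rfl | hrq
        · by_contra hc
          have h1p : 1 ≤ u r := Nat.one_le_iff_ne_zero.mpr hc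
          have : (2:ℕ∞) ≤ m r := by
            refine le_trans ?_ hq
            have : ((2:ℕ):ℕ∞) ≤ ((u r : ℕ) : ℕ∞) + 1 := by
              have : ((2:ℕ):ℕ∞) = ((1:ℕ):ℕ∞) + 1 := by norm_num
              rw [this]
              exact add_le_add_left (by exact_mod_cast h1p) 1
            simpa using this
          exact absurd this (not_le.mpr (h2 r))
        · -- r is neither p nor q, so r ∉ {i, j}, hence m r = 0
          have hpi := hmem p hp
          have hqi := hmem q hq
          have hne : p ≠ q := ne_of_lt hpq
          have hcases : (p = i ∧ q = j) ∨ (p = j ∧ q = i) := by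
            rcases hpi with rfl | rfl <;> rcases hqi with h | h
            · exact absurd h.symm hne
            · exact Or.inl ⟨rfl, h⟩
            · exact Or.inr ⟨rfl, h⟩
            · exact absurd h.symm hne
          have hrij : r ≠ i ∧ r ≠ j := by
            rcases hcases with ⟨rfl, rfl⟩ | ⟨rfl, rfl⟩
            · exact ⟨hrp, hrq⟩
            · exact ⟨hrq, hrp⟩
          have := hub r
          rw [hm1 r hrij.1 hrij.2] at this
          simpa using this
      have : ∑ t, u t = 0 := Finset.sum_eq_zero fun t _ => hu0 t
      rw [this] at hup
      omega



section PartII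
variable {ℓ k : ℕ} (ii : Fin k → ℕ)

/-- the increment vector of a move indexed by the pair `r ≤ s`. -/
def indF (r s t : Fin k) : ℕ := (if t = r then 1 else 0) + (if t = s then 1 else 0)

lemma sum_indF (r s : Fin k) : ∑ t, indF r s t = 2 := by
  unfold indF
  rw [Finset.sum_add_distrib]
  simp

variable (h1 : ∀ t, 1 ≤ ii t) (hub : ∀ t, ii t ≤ ℓ)

/-- 0-based index of the 1-based position `ii t`. -/
def posF (t : Fin k) : Fin ℓ := ⟨ii t - 1, by have := h1 t; have := hub t; omega⟩
/-- 0-based index of the 1-based position `ii t - 1` (meaningful when `2 ≤ ii t`). -/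
def posF' (t : Fin k) : Fin ℓ := ⟨ii t - 2, by have := h1 t; have := hub t; omega⟩

/-- coordinates of a vertex of `Δ` at the distinguished positions. -/
def XC (mu : Fin ℓ → ℕ) (t : Fin k) : ℕ := mu (posF ii h1 hub t)

variable (lam : Fin ℓ → ℕ)

/-- the (finite) bounds. -/
def MC (t : Fin k) : ℕ := lam (posF' ii h1 hub t) + lam (posF ii h1 hub t)

/-- reconstruct a vertex of `Δ` from its distinguished coordinates. -/
noncomputable def liftV (x : Fin k → ℕ) : Fin ℓ → ℕ := fun j =>
  if h : ∃ t, (j : ℕ) + 1 = ii t then x h.choose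
  else if h' : ∃ t, (j : ℕ) + 2 = ii t then MC ii h1 hub lam h'.choose - x h'.choose
  else lam j

/-- invariant describing the connected component of `lam`. -/
def InvC (a : ℕ) (mu : Fin ℓ → ℕ) : Prop :=
  (∀ j : Fin ℓ, (∀ t, (j : ℕ) + 1 ≠ ii t) → (∀ t, (j : ℕ) + 2 ≠ ii t) → mu j = lam j) ∧
  (∀ t, 2 ≤ ii t → mu (posF' ii h1 hub t) + mu (posF ii h1 hub t) = MC ii h1 hub lam t) ∧
  (∑ t, XC ii h1 hub mu t) % 2 = a

variable (hii : StrictMono ii)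
  (hgap : ∀ p q : Fin k, (q : ℕ) = (p : ℕ) + 1 → ii p + 1 < ii q)

include hii hgap in
lemma gap2 {s t : Fin k} (h : s < t) : ii s + 2 ≤ ii t := by
  have hs1 : (s : ℕ) + 1 < k := by have := t.isLt; have := Fin.lt_def.mp h; omega
  have hg := hgap s ⟨(s : ℕ) + 1, hs1⟩ rfl
  have hle : (⟨(s : ℕ) + 1, hs1⟩ : Fin k) ≤ t := by
    rw [Fin.le_def]; have := Fin.lt_def.mp h; simpa using this
  have := hii.monotone hle
  omega

include hii hgap in
lemma ii_apart {s t : Fin k} (h : s ≠ t) : ii s + 2 ≤ ii t ∨ ii t + 2 ≤ ii s := by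
  rcases lt_or_gt_of_ne h with h' | h'
  · exact Or.inl (gap2 ii hii hgap h')
  · exact Or.inr (gap2 ii hii hgap h')

include hii hgap in
lemma fact1 (t r : Fin k) : ((posF ii h1 hub t : Fin ℓ) : ℕ) + 1 = ii r ↔ t = r := by
  constructor
  · intro h
    by_contra hc
    rcases ii_apart ii hii hgap hc with h' | h' <;>
      (have := h1 t; simp only [posF] at h; omega)
  · rintro rfl
    have := h1 t; simp only [posF]; omega

include hii hgap in
lemma fact2 (t r : Fin k) : ¬(((posF ii h1 hub t : Fin ℓ) : ℕ) + 2 = ii r) := by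
  intro h
  rcases eq_or_ne t r with rfl | hc
  · have := h1 t; simp only [posF] at h; omega
  · rcases ii_apart ii hii hgap hc with h' | h' <;>
      (have := h1 t; simp only [posF] at h; omega)

include hii hgap in
lemma fact3 (t r : Fin k) (h2 : 2 ≤ ii t) :
    ¬(((posF' ii h1 hub t : Fin ℓ) : ℕ) + 1 = ii r) := by
  intro h
  rcases eq_or_ne t r with rfl | hc
  · simp only [posF'] at h; omega
  · rcases ii_apart ii hii hgap hc with h' | h' <;>
      (simp only [posF'] at h; omega)

include hii hgap in
lemma fact4 (t r : Fin k) (h2 : 2 ≤ ii t) :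
    ((posF' ii h1 hub t : Fin ℓ) : ℕ) + 2 = ii r ↔ t = r := by
  constructor
  · intro h
    by_contra hc
    rcases ii_apart ii hii hgap hc with h' | h' <;>
      (simp only [posF'] at h; omega)
  · rintro rfl; simp only [posF']; omega

include hii hgap in
lemma no_adjacent (t r : Fin k) : ii t + 1 ≠ ii r := by
  intro h
  rcases eq_or_ne t r with rfl | hc
  · omega
  · rcases ii_apart ii hii hgap hc with h' | h' <;> omega


include hii hgap in
lemma liftV_pos (x : Fin k → ℕ) (t : Fin k) :
    liftV ii h1 hub lam x (posF ii h1 hub t) = x t := by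
  have hex : ∃ r, ((posF ii h1 hub t : Fin ℓ) : ℕ) + 1 = ii r := ⟨t, (fact1 ii h1 hub hii hgap t t).mpr rfl⟩
  rw [liftV, dif_pos hex]
  congr 1
  exact ((fact1 ii h1 hub hii hgap t hex.choose).mp hex.choose_spec).symm

include hii hgap in
lemma liftV_pos' (x : Fin k → ℕ) (t : Fin k) (h2 : 2 ≤ ii t) :
    liftV ii h1 hub lam x (posF' ii h1 hub t) = MC ii h1 hub lam t - x t := by
  have hex1 : ¬∃ r, ((posF' ii h1 hub t : Fin ℓ) : ℕ) + 1 = ii r := by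
    rintro ⟨r, hr⟩; exact fact3 ii h1 hub hii hgap t r h2 hr
  have hex2 : ∃ r, ((posF' ii h1 hub t : Fin ℓ) : ℕ) + 2 = ii r :=
    ⟨t, (fact4 ii h1 hub hii hgap t t h2).mpr rfl⟩
  rw [liftV, dif_neg hex1, dif_pos hex2]
  have := (fact4 ii h1 hub hii hgap t hex2.choose h2).mp hex2.choose_spec
  rw [← this]

lemma liftV_other (x : Fin k → ℕ) (j : Fin ℓ)
    (hj1 : ∀ t, (j : ℕ) + 1 ≠ ii t) (hj2 : ∀ t, (j : ℕ) + 2 ≠ ii t) :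
    liftV ii h1 hub lam x j = lam j := by
  rw [liftV, dif_neg (by rintro ⟨r, hr⟩; exact hj1 r hr),
    dif_neg (by rintro ⟨r, hr⟩; exact hj2 r hr)]

include hii hgap in
lemma XC_liftV (x : Fin k → ℕ) : XC ii h1 hub (liftV ii h1 hub lam x) = x := by
  funext t
  exact liftV_pos ii h1 hub lam hii hgap x t

include hii hgap in
lemma inv_liftV (a : ℕ) (x : Fin k → ℕ) (hb : ∀ t, 2 ≤ ii t → x t ≤ MC ii h1 hub lam t)
    (hp : (∑ t, x t) % 2 = a) : InvC ii h1 hub lam a (liftV ii h1 hub lam x) := by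
  refine ⟨fun j hj1 hj2 => liftV_other ii h1 hub lam x j hj1 hj2, fun t h2 => ?_, ?_⟩
  · rw [liftV_pos ii h1 hub lam hii hgap, liftV_pos' ii h1 hub lam hii hgap x t h2]
    have := hb t h2; omega
  · rw [XC_liftV ii h1 hub lam hii hgap]; exact hp

include hii hgap in
lemma uniq (a : ℕ) (mu : Fin ℓ → ℕ) (h : InvC ii h1 hub lam a mu) :
    mu = liftV ii h1 hub lam (XC ii h1 hub mu) := by
  funext j
  by_cases hj1 : ∃ t, (j : ℕ) + 1 = ii t
  · obtain ⟨t, ht⟩ := hj1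
    have hjeq : j = posF ii h1 hub t := by
      apply Fin.ext; simp only [posF]; omega
    rw [hjeq, liftV_pos ii h1 hub lam hii hgap]
    rfl
  by_cases hj2 : ∃ t, (j : ℕ) + 2 = ii t
  · obtain ⟨t, ht⟩ := hj2
    have h2 : 2 ≤ ii t := by omega
    have hjeq : j = posF' ii h1 hub t := by
      apply Fin.ext; simp only [posF']; omega
    rw [hjeq, liftV_pos' ii h1 hub lam hii hgap _ t h2]
    have hsum := h.2.1 t h2
    have : XC ii h1 hub mu t = mu (posF ii h1 hub t) := rfl
    omega
  · push_neg at hj1 hj2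
    rw [liftV_other ii h1 hub lam _ j hj1 hj2]
    exact h.1 j hj1 hj2

include hii hgap in
lemma betaC_posF (r s t : Fin k) :
    betaC ℓ (ii r) (ii s) (posF ii h1 hub t) = (indF r s t : ℤ) := by
  unfold betaC indF
  rw [if_neg (fact2 ii h1 hub hii hgap t r), if_neg (fact2 ii h1 hub hii hgap t s)]
  have hA : (if ((posF ii h1 hub t : Fin ℓ) : ℕ) + 1 = ii r then (1:ℤ) else 0)
      = (if t = r then 1 else 0) := by
    by_cases h : t = r
    · rw [if_pos ((fact1 ii h1 hub hii hgap t r).mpr h), if_pos h]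
    · rw [if_neg (fun hc => h ((fact1 ii h1 hub hii hgap t r).mp hc)), if_neg h]
  have hB : (if ((posF ii h1 hub t : Fin ℓ) : ℕ) + 1 = ii s then (1:ℤ) else 0)
      = (if t = s then 1 else 0) := by
    by_cases h : t = s
    · rw [if_pos ((fact1 ii h1 hub hii hgap t s).mpr h), if_pos h]
    · rw [if_neg (fun hc => h ((fact1 ii h1 hub hii hgap t s).mp hc)), if_neg h]
  rw [hA, hB]
  push_cast
  split_ifs <;> ring

include hii hgap in
lemma betaC_posF' (r s t : Fin k) (h2 : 2 ≤ ii t) :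
    betaC ℓ (ii r) (ii s) (posF' ii h1 hub t) = -(indF r s t : ℤ) := by
  unfold betaC indF
  rw [if_neg (fact3 ii h1 hub hii hgap t r h2), if_neg (fact3 ii h1 hub hii hgap t s h2)]
  have hA : (if ((posF' ii h1 hub t : Fin ℓ) : ℕ) + 2 = ii r then (1:ℤ) else 0)
      = (if t = r then 1 else 0) := by
    by_cases h : t = r
    · rw [if_pos ((fact4 ii h1 hub hii hgap t r h2).mpr h), if_pos h]
    · rw [if_neg (fun hc => h ((fact4 ii h1 hub hii hgap t r h2).mp hc)), if_neg h]
  have hB : (if ((posF' ii h1 hub t : Fin ℓ) : ℕ) + 2 = ii s then (1:ℤ) else 0)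
      = (if t = s then 1 else 0) := by
    by_cases h : t = s
    · rw [if_pos ((fact4 ii h1 hub hii hgap t s h2).mpr h), if_pos h]
    · rw [if_neg (fun hc => h ((fact4 ii h1 hub hii hgap t s h2).mp hc)), if_neg h]
  rw [hA, hB]
  push_cast
  split_ifs <;> ring

lemma betaC_other (r s : Fin k) (j : Fin ℓ)
    (hj1 : ∀ t, (j : ℕ) + 1 ≠ ii t) (hj2 : ∀ t, (j : ℕ) + 2 ≠ ii t) :
    betaC ℓ (ii r) (ii s) j = 0 := by
  unfold betaC
  rw [if_neg (hj1 r), if_neg (hj1 s), if_neg (hj2 r), if_neg (hj2 s)]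
  ring


include hii hgap in
lemma shape (S : Set (ℕ × ℕ)) (hS : S = {pq | ∃ p q : Fin k, p ≤ q ∧ pq = (ii p, ii q)})
    (u v : Fin ℓ → ℕ) :
    arrowC ℓ S u v ↔ ∃ r s : Fin k, r ≤ s ∧
      (∀ t, v (posF ii h1 hub t) = u (posF ii h1 hub t) + indF r s t) ∧
      (∀ t, 2 ≤ ii t → v (posF' ii h1 hub t) + indF r s t = u (posF' ii h1 hub t)) ∧
      (∀ j : Fin ℓ, (∀ t, (j:ℕ)+1 ≠ ii t) → (∀ t, (j:ℕ)+2 ≠ ii t) → v j = u j) := by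
  subst hS
  constructor
  · rintro ⟨p, hp, heq, hcond⟩
    obtain ⟨r, s, hrs, rfl⟩ := hp
    refine ⟨r, s, hrs, ?_, ?_, ?_⟩
    · intro t
      have h := heq (posF ii h1 hub t)
      rw [betaC_posF ii h1 hub hii hgap r s t] at h
      omega
    · intro t h2
      have h := heq (posF' ii h1 hub t)
      rw [betaC_posF' ii h1 hub hii hgap r s t h2] at h
      omega
    · intro j hj1 hj2
      have h := heq j
      rw [betaC_other ii r s j hj1 hj2] at h
      omega
  · rintro ⟨r, s, hrs, hb1, hb2, hb3⟩
    refine ⟨(ii r, ii s), ⟨r, s, hrs, rfl⟩, ?_, ?_⟩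
    · intro j
      by_cases hj1 : ∃ t, (j:ℕ)+1 = ii t
      · obtain ⟨t, ht⟩ := hj1
        have hjeq : j = posF ii h1 hub t := Fin.ext (by simp only [posF]; omega)
        rw [hjeq, betaC_posF ii h1 hub hii hgap r s t]
        have := hb1 t; omega
      by_cases hj2 : ∃ t, (j:ℕ)+2 = ii t
      · obtain ⟨t, ht⟩ := hj2
        have h2 : 2 ≤ ii t := by omega
        have hjeq : j = posF' ii h1 hub t := Fin.ext (by simp only [posF']; omega)
        rw [hjeq, betaC_posF' ii h1 hub hii hgap r s t h2]
        have := hb2 t h2; omega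
      · push_neg at hj1 hj2
        rw [betaC_other ii r s j hj1 hj2]
        have := hb3 j hj1 hj2; omega
    · by_cases hrs' : r = s
      · subst hrs'
        simp only [if_pos rfl]
        intro tl htl
        have htl' : (tl : ℕ) + 2 = ii r := htl
        have h2 : 2 ≤ ii r := by omega
        have hjeq : tl = posF' ii h1 hub r := Fin.ext (by simp only [posF']; omega)
        have hr := hb2 r h2
        rw [hjeq]
        simp [indF] at hr
        omega
      · have hne : ii r ≠ ii s := fun hc => hrs' (hii.injective hc)
        rw [if_neg hne]
        constructor
        · intro tl htl
          have htl' : (tl : ℕ) + 2 = ii r := htl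
          have h2 : 2 ≤ ii r := by omega
          have hjeq : tl = posF' ii h1 hub r := Fin.ext (by simp only [posF']; omega)
          have hr := hb2 r h2
          rw [hjeq]
          simp [indF, hrs'] at hr
          omega
        · intro tl htl
          have htl' : (tl : ℕ) + 2 = ii s := htl
          have h2 : 2 ≤ ii s := by omega
          have hjeq : tl = posF' ii h1 hub s := Fin.ext (by simp only [posF']; omega)
          have hr := hb2 s h2
          rw [hjeq]
          have hsr : s ≠ r := Ne.symm hrs'
          simp [indF, hsr] at hr
          omega


lemma coord_eq (t : Fin k) : coord ℓ lam (ii t) = lam (posF ii h1 hub t) := by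
  rw [coord, dif_pos ⟨h1 t, hub t⟩]
  rfl

lemma coord_eq' (t : Fin k) (h2 : 2 ≤ ii t) :
    coord ℓ lam (ii t - 1) = lam (posF' ii h1 hub t) := by
  have hc : 1 ≤ ii t - 1 ∧ ii t - 1 ≤ ℓ := ⟨by omega, by have := hub t; omega⟩
  rw [coord, dif_pos hc]
  exact congrArg lam (Fin.ext (by simp only [posF']; omega))

variable (m : Fin k → ℕ∞)

lemma mval (hm : ∀ t, m t = if ii t = 1 then (⊤ : ℕ∞) else
      ((coord ℓ lam (ii t - 1) + coord ℓ lam (ii t) : ℕ) : ℕ∞))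
    (t : Fin k) (ht : ii t ≠ 1) : m t = ((MC ii h1 hub lam t : ℕ) : ℕ∞) := by
  rw [hm t, if_neg ht, coord_eq ii h1 hub lam t,
    coord_eq' ii h1 hub lam t (by have := h1 t; omega)]
  rfl

lemma inv_lam (a : ℕ) (ha : a = (∑ t, coord ℓ lam (ii t)) % 2) :
    InvC ii h1 hub lam a lam :=
  ⟨fun _ _ _ => rfl, fun _ _ => rfl, by
    rw [ha]
    congr 1
    exact Finset.sum_congr rfl fun t _ => (coord_eq ii h1 hub lam t).symm⟩

lemma inv_bounds (hm : ∀ t, m t = if ii t = 1 then (⊤ : ℕ∞) else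
      ((coord ℓ lam (ii t - 1) + coord ℓ lam (ii t) : ℕ) : ℕ∞))
    (a : ℕ) {mu : Fin ℓ → ℕ} (h : InvC ii h1 hub lam a mu) (t : Fin k) :
    ((XC ii h1 hub mu t : ℕ) : ℕ∞) ≤ m t := by
  by_cases ht : ii t = 1
  · rw [hm t, if_pos ht]; exact le_top
  · rw [mval ii h1 hub lam m hm t ht]
    have := h.2.1 t (by have := h1 t; omega)
    have h2 : XC ii h1 hub mu t ≤ MC ii h1 hub lam t := by
      have hd : XC ii h1 hub mu t = mu (posF ii h1 hub t) := rfl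
      omega
    exact_mod_cast h2

include hii hgap in
lemma inv_step (S : Set (ℕ × ℕ)) (hS : S = {pq | ∃ p q : Fin k, p ≤ q ∧ pq = (ii p, ii q)})
    (a : ℕ) {u v : Fin ℓ → ℕ} (hu : InvC ii h1 hub lam a u)
    (h : arrowC ℓ S u v ∨ arrowC ℓ S v u) : InvC ii h1 hub lam a v := by
  rcases h with h | h
  · rw [shape ii h1 hub hii hgap S hS] at h
    obtain ⟨r, s, hrs, hb1, hb2, hb3⟩ := h
    refine ⟨fun j hj1 hj2 => (hb3 j hj1 hj2).trans (hu.1 j hj1 hj2), fun t h2 => ?_, ?_⟩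
    · have e1 := hu.2.1 t h2; have e2 := hb1 t; have e3 := hb2 t h2
      omega
    · have hsum : ∑ t, XC ii h1 hub v t = ∑ t, XC ii h1 hub u t + ∑ t, indF r s t := by
        rw [← Finset.sum_add_distrib]
        exact Finset.sum_congr rfl fun t _ => hb1 t
      rw [hsum, sum_indF]
      have := hu.2.2
      omega
  · rw [shape ii h1 hub hii hgap S hS] at h
    obtain ⟨r, s, hrs, hb1, hb2, hb3⟩ := h
    refine ⟨fun j hj1 hj2 => (hb3 j hj1 hj2).symm.trans (hu.1 j hj1 hj2), fun t h2 => ?_, ?_⟩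
    · have e1 := hu.2.1 t h2; have e2 := hb1 t; have e3 := hb2 t h2
      omega
    · have hsum : ∑ t, XC ii h1 hub u t = ∑ t, XC ii h1 hub v t + ∑ t, indF r s t := by
        rw [← Finset.sum_add_distrib]
        exact Finset.sum_congr rfl fun t _ => hb1 t
      rw [sum_indF] at hsum
      have := hu.2.2
      omega

include hii hgap in
lemma arrow_to_xi (S : Set (ℕ × ℕ))
    (hS : S = {pq | ∃ p q : Fin k, p ≤ q ∧ pq = (ii p, ii q)})
    (hm : ∀ t, m t = if ii t = 1 then (⊤ : ℕ∞) else
      ((coord ℓ lam (ii t - 1) + coord ℓ lam (ii t) : ℕ) : ℕ∞))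
    (a : ℕ) {u v : Fin ℓ → ℕ} (hu : InvC ii h1 hub lam a u) (h : arrowC ℓ S u v) :
    xiArrow m (XC ii h1 hub u) (XC ii h1 hub v) := by
  rw [shape ii h1 hub hii hgap S hS] at h
  obtain ⟨r, s, hrs, hb1, hb2, hb3⟩ := h
  have hbound : ∀ t, ii t ≠ 1 → ((XC ii h1 hub u t : ℕ) : ℕ∞) + (indF r s t : ℕ) ≤ m t := by
    intro t ht
    rw [mval ii h1 hub lam m hm t ht]
    have h2 : 2 ≤ ii t := by have := h1 t; omega
    have e1 := hu.2.1 t h2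
    have e3 := hb2 t h2
    have : XC ii h1 hub u t + indF r s t ≤ MC ii h1 hub lam t := by
      have hd : XC ii h1 hub u t = u (posF ii h1 hub t) := rfl
      omega
    exact_mod_cast this
  rcases eq_or_ne r s with rfl | hne
  · refine Or.inl ⟨r, ?_, ?_⟩
    · by_cases ht : ii r = 1
      · rw [hm r, if_pos ht]; exact le_top
      · have := hbound r ht
        have h2 : (indF r r r : ℕ) = 2 := by simp [indF]
        rw [h2] at this
        exact_mod_cast this
    · funext t
      have e := hb1 t
      have hdu : XC ii h1 hub u t = u (posF ii h1 hub t) := rfl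
      have hdv : XC ii h1 hub v t = v (posF ii h1 hub t) := rfl
      simp only [Pi.add_apply, Pi.single_apply, hdu, hdv, indF] at e ⊢
      split_ifs at e ⊢ <;> omega
  · have hlt : r < s := lt_of_le_of_ne hrs hne
    refine Or.inr ⟨r, s, hlt, ?_, ?_, ?_⟩
    · by_cases ht : ii r = 1
      · rw [hm r, if_pos ht]; exact le_top
      · have := hbound r ht
        have h2 : (indF r s r : ℕ) = 1 := by simp [indF, hne]
        rw [h2] at this
        exact_mod_cast this
    · by_cases ht : ii s = 1
      · rw [hm s, if_pos ht]; exact le_top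
      · have := hbound s ht
        have h2 : (indF r s s : ℕ) = 1 := by
          have : s ≠ r := Ne.symm hne
          simp [indF, this]
        rw [h2] at this
        exact_mod_cast this
    · funext t
      have e := hb1 t
      have hdu : XC ii h1 hub u t = u (posF ii h1 hub t) := rfl
      have hdv : XC ii h1 hub v t = v (posF ii h1 hub t) := rfl
      simp only [Pi.add_apply, Pi.single_apply, hdu, hdv, indF] at e ⊢
      split_ifs at e ⊢ <;> omega

include hii hgap in
lemma xi_to_arrow (S : Set (ℕ × ℕ))
    (hS : S = {pq | ∃ p q : Fin k, p ≤ q ∧ pq = (ii p, ii q)})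
    (a : ℕ) {u v : Fin ℓ → ℕ} (hu : InvC ii h1 hub lam a u) (hv : InvC ii h1 hub lam a v)
    (hxi : xiArrow m (XC ii h1 hub u) (XC ii h1 hub v)) : arrowC ℓ S u v := by
  rw [shape ii h1 hub hii hgap S hS]
  have hoth : ∀ j : Fin ℓ, (∀ t, (j:ℕ)+1 ≠ ii t) → (∀ t, (j:ℕ)+2 ≠ ii t) → v j = u j :=
    fun j hj1 hj2 => (hv.1 j hj1 hj2).trans (hu.1 j hj1 hj2).symm
  rcases hxi with ⟨j, hb, heq⟩ | ⟨i, j, hij, hbi, hbj, heq⟩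
  · refine ⟨j, j, le_refl j, ?_, ?_, hoth⟩
    · intro t
      have e := congrFun heq t
      have hdu : XC ii h1 hub u t = u (posF ii h1 hub t) := rfl
      have hdv : XC ii h1 hub v t = v (posF ii h1 hub t) := rfl
      simp only [Pi.add_apply, Pi.single_apply, hdu, hdv] at e
      simp only [indF]
      split_ifs at e ⊢ <;> omega
    · intro t h2
      have e := congrFun heq t
      have hdu : XC ii h1 hub u t = u (posF ii h1 hub t) := rfl
      have hdv : XC ii h1 hub v t = v (posF ii h1 hub t) := rfl
      simp only [Pi.add_apply, Pi.single_apply, hdu, hdv] at e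
      have e1 := hu.2.1 t h2
      have e2 := hv.2.1 t h2
      simp only [indF]
      split_ifs at e ⊢ <;> omega
  · refine ⟨i, j, le_of_lt hij, ?_, ?_, hoth⟩
    · intro t
      have e := congrFun heq t
      have hdu : XC ii h1 hub u t = u (posF ii h1 hub t) := rfl
      have hdv : XC ii h1 hub v t = v (posF ii h1 hub t) := rfl
      simp only [Pi.add_apply, Pi.single_apply, hdu, hdv] at e
      simp only [indF]
      split_ifs at e ⊢ <;> omega
    · intro t h2
      have e := congrFun heq t
      have hdu : XC ii h1 hub u t = u (posF ii h1 hub t) := rfl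
      have hdv : XC ii h1 hub v t = v (posF ii h1 hub t) := rfl
      simp only [Pi.add_apply, Pi.single_apply, hdu, hdv] at e
      have e1 := hu.2.1 t h2
      have e2 := hv.2.1 t h2
      simp only [indF]
      split_ifs at e ⊢ <;> omega

include hii hgap in
lemma inv_of_comp (S : Set (ℕ × ℕ)) (hS : S = {pq | ∃ p q : Fin k, p ≤ q ∧ pq = (ii p, ii q)})
    (a : ℕ) (ha : a = (∑ t, coord ℓ lam (ii t)) % 2) {mu : Fin ℓ → ℕ}
    (h : Relation.ReflTransGen (fun u v => arrowC ℓ S u v ∨ arrowC ℓ S v u) lam mu) :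
    InvC ii h1 hub lam a mu := by
  induction h with
  | refl => exact inv_lam ii h1 hub lam a ha
  | tail _ hstep ih => exact inv_step ii h1 hub lam hii hgap S hS a ih hstep

lemma sum_add_single (z : Fin k → ℕ) (j : Fin k) (c : ℕ) :
    ∑ t : Fin k, (z + Pi.single j c : Fin k → ℕ) t = (∑ t : Fin k, z t) + c := by
  have h : ∑ t : Fin k, (z + Pi.single j c : Fin k → ℕ) t
      = (∑ t : Fin k, z t) + ∑ t : Fin k, Pi.single j c t := by
    rw [← Finset.sum_add_distrib]; rfl
  rw [h, sum_single]

lemma sum_add_pair (z : Fin k → ℕ) (i j : Fin k) :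
    ∑ t : Fin k, (z + Pi.single i 1 + Pi.single j 1 : Fin k → ℕ) t
      = (∑ t : Fin k, z t) + 2 := by
  rw [sum_add_single (z + Pi.single i 1) j 1, sum_add_single z i 1]

include hii hgap in
lemma transport (S : Set (ℕ × ℕ)) (hS : S = {pq | ∃ p q : Fin k, p ≤ q ∧ pq = (ii p, ii q)})
    (hm : ∀ t, m t = if ii t = 1 then (⊤ : ℕ∞) else
      ((coord ℓ lam (ii t - 1) + coord ℓ lam (ii t) : ℕ) : ℕ∞))
    (a : ℕ) {x y : Fin k → ℕ}
    (h : Relation.ReflTransGen (RXi m) x y) :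
    ∀ mu : Fin ℓ → ℕ, InvC ii h1 hub lam a mu → XC ii h1 hub mu = x →
    ∃ nu, InvC ii h1 hub lam a nu ∧ XC ii h1 hub nu = y ∧
      Relation.ReflTransGen (fun u v => arrowC ℓ S u v ∨ arrowC ℓ S v u) mu nu := by
  induction h with
  | refl => exact fun mu hmu hx => ⟨mu, hmu, hx, .refl⟩
  | @tail b c hxb hbc ih =>
    intro mu hmu hx
    obtain ⟨nu', hnu', hX', hR'⟩ := ih mu hmu hx
    have hbassum : ∀ t, 2 ≤ ii t → b t ≤ MC ii h1 hub lam t := by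
      intro t h2
      have hs := hnu'.2.1 t h2
      have hd : nu' (posF ii h1 hub t) = b t := by
        rw [← hX']; rfl
      omega
    have hbpar : (∑ t, b t) % 2 = a := by
      have := hnu'.2.2
      rw [hX'] at this
      exact this
    have hcast : ∀ (t : Fin k) (w : ℕ) (cst : ℕ), 2 ≤ ii t →
        ((w : ℕ∞) + (cst : ℕ) ≤ m t) → w + cst ≤ MC ii h1 hub lam t := by
      intro t w cst h2 hle
      rw [mval ii h1 hub lam m hm t (by omega)] at hle
      exact_mod_cast hle
    rcases hbc with harr | harr
    · -- upward step  b → c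
      have hcb : ∀ t, 2 ≤ ii t → c t ≤ MC ii h1 hub lam t := by
        intro t h2
        rcases harr with ⟨j, hbnd, heq⟩ | ⟨i, j, hij, hbi, hbj, heq⟩
        · subst heq
          rcases eq_or_ne t j with rfl | htj
          · have := hcast t (b t) 2 h2 (by exact_mod_cast hbnd)
            simp [Pi.single_apply]
            omega
          · simp [Pi.single_apply, htj]
            exact hbassum t h2
        · subst heq
          rcases eq_or_ne t i with rfl | hti
          · have := hcast t (b t) 1 h2 (by exact_mod_cast hbi)
            simp [Pi.single_apply, ne_of_lt hij]
            omega
          rcases eq_or_ne t j with rfl | htj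
          · have := hcast t (b t) 1 h2 (by exact_mod_cast hbj)
            simp [Pi.single_apply, (ne_of_lt hij).symm]
            omega
          · simp [Pi.single_apply, hti, htj]
            exact hbassum t h2
      have hcpar : (∑ t, c t) % 2 = a := by
        rcases harr with ⟨j, hbnd, heq⟩ | ⟨i, j, hij, hbi, hbj, heq⟩
        · subst heq
          rw [sum_add_single]
          omega
        · subst heq
          rw [sum_add_pair]
          omega
      refine ⟨liftV ii h1 hub lam c,
        inv_liftV ii h1 hub lam hii hgap a c hcb hcpar,
        XC_liftV ii h1 hub lam hii hgap c, hR'.tail (Or.inl ?_)⟩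
      refine xi_to_arrow ii h1 hub lam hii hgap m S hS a hnu'
        (inv_liftV ii h1 hub lam hii hgap a c hcb hcpar) ?_
      rw [hX', XC_liftV ii h1 hub lam hii hgap c]
      exact harr
    · -- downward step  c → b
      have hlec : ∀ t, c t ≤ b t := by
        intro t
        rcases harr with ⟨j, hbnd, heq⟩ | ⟨i, j, hij, hbi, hbj, heq⟩
        · subst heq
          rcases eq_or_ne t j with rfl | htj
          · simp [Pi.single_apply]
          · simp [Pi.single_apply, htj]
        · subst heq
          rcases eq_or_ne t i with rfl | hti
          · simp [Pi.single_apply, ne_of_lt hij]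
          rcases eq_or_ne t j with rfl | htj
          · simp [Pi.single_apply, (ne_of_lt hij).symm]
          · simp [Pi.single_apply, hti, htj]
      have hcb : ∀ t, 2 ≤ ii t → c t ≤ MC ii h1 hub lam t :=
        fun t h2 => le_trans (hlec t) (hbassum t h2)
      have hcpar : (∑ t, c t) % 2 = a := by
        rcases harr with ⟨j, hbnd, heq⟩ | ⟨i, j, hij, hbi, hbj, heq⟩
        · have := sum_add_single c j 2
          rw [← heq] at this
          omega
        · have := sum_add_pair c i j
          rw [← heq] at this
          omega
      refine ⟨liftV ii h1 hub lam c,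
        inv_liftV ii h1 hub lam hii hgap a c hcb hcpar,
        XC_liftV ii h1 hub lam hii hgap c, hR'.tail (Or.inr ?_)⟩
      refine xi_to_arrow ii h1 hub lam hii hgap m S hS a
        (inv_liftV ii h1 hub lam hii hgap a c hcb hcpar) hnu' ?_
      rw [hX', XC_liftV ii h1 hub lam hii hgap c]
      exact harr

end PartII

end Stmt10

open Stmt10 in
/-- for a regular `Ψ = Ψ(i_1, …, i_k)` in type `C_ℓ` and `λ ∈ ℕ^ℓ` having at
least one arrow of `Δ_Ψ` into or out of it, the connected component of `λ` in `Δ_Ψ` is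
isomorphic as a quiver to `Ξ_a(m)` with `m_t = λ_{i_t−1} + λ_{i_t}` (`∞` when `i_t = 1`)
and `a ≡ λ_{i_1} + ⋯ + λ_{i_k} (mod 2)`. -/
theorem stmt_10 (ℓ k : ℕ) (hℓ : 2 ≤ ℓ) (hk : 1 ≤ k)
    (ii : Fin k → ℕ) (hii : StrictMono ii) (h1 : ∀ t, 1 ≤ ii t) (hub : ∀ t, ii t ≤ ℓ)
    (hgap : ∀ p q : Fin k, (q : ℕ) = (p : ℕ) + 1 → ii p + 1 < ii q)
    (S : Set (ℕ × ℕ)) (hS : S = {pq | ∃ p q : Fin k, p ≤ q ∧ pq = (ii p, ii q)})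
    (lam : Fin ℓ → ℕ) (hlam : ∃ mu, arrowC ℓ S lam mu ∨ arrowC ℓ S mu lam)
    (m : Fin k → ℕ∞)
    (hm : ∀ t, m t = if ii t = 1 then (⊤ : ℕ∞) else
      ((coord ℓ lam (ii t - 1) + coord ℓ lam (ii t) : ℕ) : ℕ∞))
    (a : ℕ) (ha : a = (∑ t, coord ℓ lam (ii t)) % 2) :
    ∃ F : {mu : Fin ℓ → ℕ //
            Relation.ReflTransGen (fun u v => arrowC ℓ S u v ∨ arrowC ℓ S v u) lam mu} ≃
          {x : Fin k → ℕ // xiVert m a x},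
      ∀ u v, arrowC ℓ S u.1 v.1 ↔ xiArrow m (F u).1 (F v).1 := by
  classical
  have invlam : InvC ii h1 hub lam a lam := inv_lam ii h1 hub lam a ha
  have invcomp : ∀ mu : Fin ℓ → ℕ,
      Relation.ReflTransGen (fun u v => arrowC ℓ S u v ∨ arrowC ℓ S v u) lam mu →
      InvC ii h1 hub lam a mu :=
    fun mu h => inv_of_comp ii h1 hub lam hii hgap S hS a ha h
  have hex : ∃ u v : Fin k → ℕ, (∀ i, (u i : ℕ∞) ≤ m i) ∧ (∑ t, u t) % 2 = a ∧
      xiArrow m u v := by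
    obtain ⟨mu0, h | h⟩ := hlam
    · exact ⟨_, _, fun t => inv_bounds ii h1 hub lam m hm a invlam t, invlam.2.2,
        arrow_to_xi ii h1 hub lam hii hgap m S hS hm a invlam h⟩
    · have hmu0 : InvC ii h1 hub lam a mu0 :=
        inv_step ii h1 hub lam hii hgap S hS a invlam (Or.inr h)
      exact ⟨_, _, fun t => inv_bounds ii h1 hub lam m hm a hmu0 t, hmu0.2.2,
        arrow_to_xi ii h1 hub lam hii hgap m S hS hm a hmu0 h⟩
  have hreach : ∀ x : Fin k → ℕ, xiVert m a x →
      Relation.ReflTransGen (fun u v => arrowC ℓ S u v ∨ arrowC ℓ S v u) lam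
        (liftV ii h1 hub lam x) := by
    intro x hx
    have hconn : Relation.ReflTransGen (RXi m) (XC ii h1 hub lam) x :=
      conn_xi m a hex _ x (fun t => inv_bounds ii h1 hub lam m hm a invlam t) hx.1
        invlam.2.2 hx.2
    obtain ⟨nu, hnu, hXnu, hR⟩ :=
      transport ii h1 hub lam hii hgap m S hS hm a hconn lam invlam rfl
    have h2 := uniq ii h1 hub lam hii hgap a nu hnu
    rw [hXnu] at h2
    rwa [← h2]
  refine ⟨⟨fun u => ⟨XC ii h1 hub u.1,
      fun t => inv_bounds ii h1 hub lam m hm a (invcomp u.1 u.2) t, (invcomp u.1 u.2).2.2⟩,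
    fun x => ⟨liftV ii h1 hub lam x.1, hreach x.1 x.2⟩, fun u => ?_, fun x => ?_⟩,
    fun u v => ?_⟩
  · apply Subtype.ext
    exact (uniq ii h1 hub lam hii hgap a u.1 (invcomp u.1 u.2)).symm
  · apply Subtype.ext
    exact XC_liftV ii h1 hub lam hii hgap x.1
  · constructor
    · exact fun h => arrow_to_xi ii h1 hub lam hii hgap m S hS hm a (invcomp u.1 u.2) h
    · exact fun h =>
        xi_to_arrow ii h1 hub lam hii hgap m S hS a (invcomp u.1 u.2) (invcomp v.1 v.2) h
end

section
/- Let Ψ ⊆ R^+ be an extremal set of positive roots of type A_ℓ, viewed as a set of roots α_{i,j}, with associated quiver Δ_Ψ on ℕ^ℓ. Then Ψ is regular if and only if both of the following hold: whenever α_{i,j}, α_{i,k} ∈ Ψ with j < k one has k > j + 1, and whenever α_{i,k}, α_{j,k} ∈ Ψ with i < j one has j > i + 1. -/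
open RealInnerProductSpace

/-- The coordinates of the type `A_ℓ` root `α_{i,j} = α_i + ⋯ + α_j` (`1`-based positions)
with respect to the fundamental weights. -/
def alphaA (ℓ i j : ℕ) : Fin ℓ → ℤ := fun t =>
  (if (t : ℕ) + 1 = i then 1 else 0) + (if (t : ℕ) + 1 = j then 1 else 0)
    - (if (t : ℕ) + 2 = i then 1 else 0) - (if (t : ℕ) = j then 1 else 0)

/-- The arrow relation of the quiver `Δ_Ψ` on `ℕ^ℓ` where `Ψ` is given by a set `S` of index
pairs `(i, j)` : an arrow `λ ← λ + α_{i,j}` for `(i, j) ∈ S` whenever `λ_{i−1} ≥ 1`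
(no condition when `i = 1`) and `λ_{j+1} ≥ 1` (no condition when `j = ℓ`). -/
def arrowA (ℓ : ℕ) (S : Set (ℕ × ℕ)) (lam mu : Fin ℓ → ℕ) : Prop :=
  ∃ p ∈ S, (∀ t : Fin ℓ, (mu t : ℤ) = (lam t : ℤ) + alphaA ℓ p.1 p.2 t) ∧
    (∀ t : Fin ℓ, (t : ℕ) + 2 = p.1 → 1 ≤ lam t) ∧
    (∀ t : Fin ℓ, (t : ℕ) = p.2 → 1 ≤ lam t)

/-- `t_{λ,η}` : the number of `μ ∈ ℕ^ℓ` with arrows `λ ← μ` and `μ ← λ + η`. -/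
noncomputable def tCount (ℓ : ℕ) (S : Set (ℕ × ℕ)) (lam : Fin ℓ → ℕ) (η : Fin ℓ → ℤ) : ℕ :=
  Nat.card {mu : Fin ℓ → ℕ | arrowA ℓ S lam mu ∧
    ∃ nu : Fin ℓ → ℕ, (∀ t, (nu t : ℤ) = (lam t : ℤ) + η t) ∧ arrowA ℓ S mu nu}

/-- `m_η` : the number of ordered pairs `(β, β') ∈ Ψ × Ψ` of roots with `β + β' = η`. -/
noncomputable def mCount (ℓ : ℕ) (Ψv : Set (Fin ℓ → ℤ)) (η : Fin ℓ → ℤ) : ℕ :=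
  Nat.card {bb : (Fin ℓ → ℤ) × (Fin ℓ → ℤ) | bb.1 ∈ Ψv ∧ bb.2 ∈ Ψv ∧ bb.1 + bb.2 = η}

/-- The vector `ε_pos ∈ ℝ^{ℓ+1}` at the `1`-based position `pos` (and `0` out of range). -/
noncomputable def epsA (ℓ pos : ℕ) : EuclideanSpace ℝ (Fin (ℓ + 1)) :=
  if h : 1 ≤ pos ∧ pos ≤ ℓ + 1 then EuclideanSpace.single ⟨pos - 1, by omega⟩ 1 else 0

/-- The root system of type `A_ℓ`, realized in `ℝ^{ℓ+1}` as
`{ε_a − ε_b : a ≠ b}`. -/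
def RrootA (ℓ : ℕ) : Set (EuclideanSpace ℝ (Fin (ℓ + 1))) :=
  {v | ∃ a b : Fin (ℓ + 1), a ≠ b ∧
    v = EuclideanSpace.single a (1 : ℝ) - EuclideanSpace.single b (1 : ℝ)}

lemma sum_indicator (ℓ x k : ℕ) :
    (∑ t : Fin ℓ, if k ≤ (t : ℕ) + 1 then (if (t : ℕ) + 1 = x then (1:ℤ) else 0) else 0)
      = if 1 ≤ x ∧ x ≤ ℓ ∧ k ≤ x then 1 else 0 := by
  by_cases hx : 1 ≤ x ∧ x ≤ ℓ
  · have : ∀ t : Fin ℓ,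
        (if k ≤ (t : ℕ) + 1 then (if (t : ℕ) + 1 = x then (1:ℤ) else 0) else 0)
        = if t = (⟨x - 1, by omega⟩ : Fin ℓ) then (if k ≤ x then (1:ℤ) else 0) else 0 := by
      intro t
      have ht : (t = (⟨x - 1, by omega⟩ : Fin ℓ)) ↔ ((t : ℕ) + 1 = x) := by
        rw [Fin.ext_iff]; constructor <;> intro h <;> simp at h ⊢ <;> omega
      by_cases h : (t : ℕ) + 1 = x
      · rw [if_pos (ht.mpr h)]; simp [h]
      · rw [if_neg (fun hh => h (ht.mp hh))]
        split_ifs <;> simp_all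
    rw [Finset.sum_congr rfl (fun t _ => this t), Finset.sum_ite_eq' Finset.univ]
    simp only [Finset.mem_univ, if_pos]
    split_ifs <;> first | rfl | omega
  · rw [if_neg (by omega)]
    apply Finset.sum_eq_zero
    intro t _
    have : (t : ℕ) + 1 ≠ x := by have := t.isLt; omega
    split_ifs <;> first | rfl | (exact absurd ‹_› this)


lemma cumsum_alpha (ℓ i j k : ℕ) (hi : 1 ≤ i) (hij : i ≤ j) (hj : j ≤ ℓ)
    (hk : 1 ≤ k) (hk2 : k ≤ ℓ + 1) :
    (∑ t : Fin ℓ, if k ≤ (t : ℕ) + 1 then alphaA ℓ i j t else 0)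
      = (if k = i then (1:ℤ) else 0) - (if k = j + 1 then 1 else 0)
        + (if j = ℓ then 1 else 0) := by
  have expand : ∀ t : Fin ℓ, (if k ≤ (t : ℕ) + 1 then alphaA ℓ i j t else 0)
      = (if k ≤ (t:ℕ)+1 then (if (t:ℕ)+1 = i then (1:ℤ) else 0) else 0)
        + (if k ≤ (t:ℕ)+1 then (if (t:ℕ)+1 = j then (1:ℤ) else 0) else 0)
        - (if k ≤ (t:ℕ)+1 then (if (t:ℕ)+1 = i-1 then (1:ℤ) else 0) else 0)
        - (if k ≤ (t:ℕ)+1 then (if (t:ℕ)+1 = j+1 then (1:ℤ) else 0) else 0) := by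
    intro t
    have h1 : ((t:ℕ)+2 = i) ↔ ((t:ℕ)+1 = i-1) := by omega
    have h2 : ((t:ℕ) = j) ↔ ((t:ℕ)+1 = j+1) := by omega
    simp only [alphaA, h1, h2]
    split_ifs <;> ring
  rw [Finset.sum_congr rfl (fun t _ => expand t)]
  rw [Finset.sum_sub_distrib, Finset.sum_sub_distrib, Finset.sum_add_distrib]
  rw [sum_indicator, sum_indicator, sum_indicator, sum_indicator]
  split_ifs <;> omega


lemma pair_core (a c i i' : ℕ)
    (h1 : (1:ℤ) + (if a = c then (1:ℤ) else 0)
      = (if a = i then (1:ℤ) else 0) + (if a = i' then 1 else 0))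
    (h2 : (1:ℤ) + (if c = a then (1:ℤ) else 0)
      = (if c = i then (1:ℤ) else 0) + (if c = i' then 1 else 0)) :
    (a = i ∧ c = i') ∨ (a = i' ∧ c = i) := by
  split_ifs at h1 h2 <;> omega

lemma decomp_unique (ℓ a b c d i j i' j' : ℕ)
    (ha : 1 ≤ a) (hab : a ≤ b) (hb : b ≤ ℓ)
    (hc : 1 ≤ c) (hcd : c ≤ d) (hd : d ≤ ℓ)
    (hi : 1 ≤ i) (hij : i ≤ j) (hj : j ≤ ℓ)
    (hi' : 1 ≤ i') (hij' : i' ≤ j') (hj' : j' ≤ ℓ)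
    (had : a ≤ d) (hcb : c ≤ b) (haj : a ≤ j) (haj' : a ≤ j')
    (hcj : c ≤ j) (hcj' : c ≤ j') (hib : i ≤ b) (hid : i ≤ d)
    (hi'b : i' ≤ b) (hi'd : i' ≤ d)
    (h : ∀ t : Fin ℓ, alphaA ℓ a b t + alphaA ℓ c d t
        = alphaA ℓ i j t + alphaA ℓ i' j' t) :
    ((a = i ∧ c = i') ∨ (a = i' ∧ c = i)) ∧ ((b = j ∧ d = j') ∨ (b = j' ∧ d = j)) := by
  have hcum : ∀ k : ℕ, 1 ≤ k → k ≤ ℓ + 1 →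
      ((if k = a then (1:ℤ) else 0) - (if k = b + 1 then 1 else 0) + (if b = ℓ then 1 else 0))
      + ((if k = c then (1:ℤ) else 0) - (if k = d + 1 then 1 else 0) + (if d = ℓ then 1 else 0))
      = ((if k = i then (1:ℤ) else 0) - (if k = j + 1 then 1 else 0) + (if j = ℓ then 1 else 0))
      + ((if k = i' then (1:ℤ) else 0) - (if k = j' + 1 then 1 else 0) + (if j' = ℓ then 1 else 0)) := by
    intro k hk1 hk2
    rw [← cumsum_alpha ℓ a b k ha hab hb hk1 hk2, ← cumsum_alpha ℓ c d k hc hcd hd hk1 hk2,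
      ← cumsum_alpha ℓ i j k hi hij hj hk1 hk2, ← cumsum_alpha ℓ i' j' k hi' hij' hj' hk1 hk2,
      ← Finset.sum_add_distrib, ← Finset.sum_add_distrib]
    apply Finset.sum_congr rfl
    intro t _
    split_ifs with h1
    · exact h t
    · ring
  -- sum over k in Icc 1 (ℓ+1) to identify the constants
  have hsum : ∀ x : ℕ, 1 ≤ x → x ≤ ℓ + 1 →
      (∑ k ∈ Finset.Icc 1 (ℓ+1), if k = x then (1:ℤ) else 0) = 1 := by
    intro x h1 h2
    rw [Finset.sum_ite_eq' (Finset.Icc 1 (ℓ+1)) x (fun _ => (1:ℤ))]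
    rw [if_pos (Finset.mem_Icc.mpr ⟨h1, h2⟩)]
  have hconstsum : ∀ C : ℤ, (∑ _k ∈ Finset.Icc 1 (ℓ+1), C) = (ℓ+1) * C := by
    intro C
    rw [Finset.sum_const, Nat.card_Icc]
    simp [mul_comm]
  have hconst : (if b = ℓ then (1:ℤ) else 0) + (if d = ℓ then 1 else 0)
      = (if j = ℓ then (1:ℤ) else 0) + (if j' = ℓ then 1 else 0) := by
    have hS := Finset.sum_congr rfl (fun k hk => hcum k (Finset.mem_Icc.mp hk).1 (Finset.mem_Icc.mp hk).2)
    rw [Finset.sum_add_distrib, Finset.sum_add_distrib] at hS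
    simp only [Finset.sum_add_distrib, Finset.sum_sub_distrib] at hS
    rw [hsum a ha (by omega), hsum c hc (by omega), hsum i hi (by omega), hsum i' hi' (by omega),
      hsum (b+1) (by omega) (by omega), hsum (d+1) (by omega) (by omega),
      hsum (j+1) (by omega) (by omega), hsum (j'+1) (by omega) (by omega),
      hconstsum, hconstsum, hconstsum, hconstsum] at hS
    have hl : (0:ℤ) < (ℓ:ℤ) + 1 := by positivity
    apply mul_left_cancel₀ (ne_of_gt hl)
    linarith [hS]
  have heq : ∀ k : ℕ, 1 ≤ k → k ≤ ℓ + 1 →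
      ((if k = a then (1:ℤ) else 0) + (if k = c then 1 else 0))
        - ((if k = b+1 then (1:ℤ) else 0) + (if k = d+1 then 1 else 0))
      = ((if k = i then (1:ℤ) else 0) + (if k = i' then 1 else 0))
        - ((if k = j+1 then (1:ℤ) else 0) + (if k = j'+1 then 1 else 0)) := by
    intro k hk1 hk2
    have := hcum k hk1 hk2
    linarith [this, hconst]
  constructor
  · have Ha := heq a ha (by omega)
    rw [if_pos rfl, if_neg (by omega : a ≠ b+1), if_neg (by omega : a ≠ d+1),
      if_neg (by omega : a ≠ j+1), if_neg (by omega : a ≠ j'+1)] at Ha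
    have Hc := heq c hc (by omega)
    rw [if_neg (by omega : c ≠ b+1), if_neg (by omega : c ≠ d+1),
      if_neg (by omega : c ≠ j+1), if_neg (by omega : c ≠ j'+1)] at Hc
    rw [if_pos rfl] at Hc
    apply pair_core a c i i'
    · split_ifs at Ha ⊢ <;> omega
    · split_ifs at Hc ⊢ <;> omega
  · have Hb := heq (b+1) (by omega) (by omega)
    rw [if_neg (by omega : b+1 ≠ a), if_neg (by omega : b+1 ≠ c),
      if_neg (by omega : b+1 ≠ i), if_neg (by omega : b+1 ≠ i'), if_pos rfl] at Hb
    have Hd := heq (d+1) (by omega) (by omega)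
    rw [if_neg (by omega : d+1 ≠ a), if_neg (by omega : d+1 ≠ c),
      if_neg (by omega : d+1 ≠ i), if_neg (by omega : d+1 ≠ i')] at Hd
    rw [if_pos rfl] at Hd
    have := pair_core (b+1) (d+1) (j+1) (j'+1) ?_ ?_
    · omega
    · split_ifs at Hb ⊢ <;> omega
    · split_ifs at Hd ⊢ <;> omega


lemma alpha_lb (ℓ a b : ℕ) (ha : 1 ≤ a) (hab : a ≤ b) (hb : b ≤ ℓ) (t : Fin ℓ) :
    -1 ≤ alphaA ℓ a b t ∧ (alphaA ℓ a b t < 0 → ((t:ℕ)+2 = a ∨ (t:ℕ) = b)) := by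
  have := t.isLt
  simp only [alphaA]
  split_ifs <;> omega

def CondP (ℓ : ℕ) (lam : Fin ℓ → ℕ) (a b c d : ℕ) : Prop :=
  (∀ t : Fin ℓ, (t:ℕ)+2 = a → 1 ≤ lam t) ∧ (∀ t : Fin ℓ, (t:ℕ) = b → 1 ≤ lam t) ∧
  (∀ t : Fin ℓ, (t:ℕ)+2 = c → 1 ≤ (lam t : ℤ) + alphaA ℓ a b t) ∧
  (∀ t : Fin ℓ, (t:ℕ) = d → 1 ≤ (lam t : ℤ) + alphaA ℓ a b t)

def XiP (ℓ : ℕ) (lam : Fin ℓ → ℕ) (a c b d : ℕ) : Prop :=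
  ∀ t : Fin ℓ, (((t:ℕ)+2 = a ∨ (t:ℕ)+2 = c) → 1 + (if a = c then 1 else 0) ≤ lam t) ∧
    (((t:ℕ) = b ∨ (t:ℕ) = d) → 1 + (if b = d then 1 else 0) ≤ lam t)

lemma cond_iff (ℓ : ℕ) (lam : Fin ℓ → ℕ) (a b c d : ℕ)
    (ha : 1 ≤ a) (hab : a ≤ b) (hb : b ≤ ℓ)
    (hc : 1 ≤ c) (hcd : c ≤ d) (hd : d ≤ ℓ)
    (had : a ≤ d) (hcb : c ≤ b)
    (n1 : a ≠ c + 1) (n2 : c ≠ a + 1) (n3 : b ≠ d + 1) (n4 : d ≠ b + 1) :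
    CondP ℓ lam a b c d ↔ XiP ℓ lam a c b d := by
  have key1 : ∀ t : Fin ℓ, (t:ℕ)+2 = c → alphaA ℓ a b t = -(if a = c then 1 else 0) := by
    intro t ht
    simp only [alphaA]
    split_ifs <;> omega
  have key2 : ∀ t : Fin ℓ, (t:ℕ) = d → alphaA ℓ a b t = -(if b = d then 1 else 0) := by
    intro t ht
    simp only [alphaA]
    split_ifs <;> omega
  constructor
  · rintro ⟨h1, h2, h3, h4⟩ t
    constructor
    · rintro (ht | ht)
      · by_cases hac : a = c
        · have := h3 t (by omega)
          rw [key1 t (by omega), if_pos hac] at this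
          rw [if_pos hac]
          omega
        · have := h1 t ht
          rw [if_neg hac]
          omega
      · have := h3 t ht
        rw [key1 t ht] at this
        split_ifs at this ⊢ <;> omega
    · rintro (ht | ht)
      · by_cases hbd : b = d
        · have := h4 t (by omega)
          rw [key2 t (by omega), if_pos hbd] at this
          rw [if_pos hbd]
          omega
        · have := h2 t ht
          rw [if_neg hbd]
          omega
      · have := h4 t ht
        rw [key2 t ht] at this
        split_ifs at this ⊢ <;> omega
  · intro h
    refine ⟨fun t ht => ?_, fun t ht => ?_, fun t ht => ?_, fun t ht => ?_⟩
    · have := (h t).1 (Or.inl ht); split_ifs at this <;> omega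
    · have := (h t).2 (Or.inl ht); split_ifs at this <;> omega
    · have := (h t).1 (Or.inr ht); rw [key1 t ht]; split_ifs at this ⊢ <;> omega
    · have := (h t).2 (Or.inr ht); rw [key2 t ht]; split_ifs at this ⊢ <;> omega

lemma xi_swap1 (ℓ : ℕ) (lam : Fin ℓ → ℕ) (a c b d : ℕ) :
    XiP ℓ lam a c b d ↔ XiP ℓ lam c a b d := by
  unfold XiP
  constructor <;> intro h t <;> obtain ⟨h1, h2⟩ := h t <;>
    refine ⟨fun ho => ?_, h2⟩ <;> have := h1 (Or.symm ho) <;>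
    split_ifs at this ⊢ <;> omega

lemma xi_swap2 (ℓ : ℕ) (lam : Fin ℓ → ℕ) (a c b d : ℕ) :
    XiP ℓ lam a c b d ↔ XiP ℓ lam a c d b := by
  unfold XiP
  constructor <;> intro h t <;> obtain ⟨h1, h2⟩ := h t <;>
    refine ⟨h1, fun ho => ?_⟩ <;> have := h2 (Or.symm ho) <;>
    split_ifs at this ⊢ <;> omega


def compP (i i' j j' : ℕ) (p : ℕ × ℕ) : ℕ × ℕ :=
  (if p.1 = i then i' else i, if p.2 = j then j' else j)

def FsetP (i i' j j' : ℕ) : Set (ℕ × ℕ) :=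
  {p | (p.1 = i ∨ p.1 = i') ∧ (p.2 = j ∨ p.2 = j')}

lemma comp_mem (i i' j j' : ℕ) (p : ℕ × ℕ) (hp : p ∈ FsetP i i' j j') :
    compP i i' j j' p ∈ FsetP i i' j j' := by
  obtain ⟨h1, h2⟩ := hp
  constructor <;> simp only [compP] <;> split_ifs <;> tauto

set_option maxHeartbeats 1000000 in
lemma sum_comp (ℓ i i' j j' a b : ℕ) (ha : a = i ∨ a = i') (hb : b = j ∨ b = j') (t : Fin ℓ) :
    alphaA ℓ a b t + alphaA ℓ (if a = i then i' else i) (if b = j then j' else j) t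
      = alphaA ℓ i j t + alphaA ℓ i' j' t := by
  rcases ha with rfl | rfl <;> rcases hb with rfl | rfl
  · rw [if_pos rfl, if_pos rfl]
  · rw [if_pos rfl]
    by_cases h2 : b = j
    · subst h2; rw [if_pos rfl]
      try (simp only [alphaA]; split_ifs <;> omega)
    · rw [if_neg h2]
      try (simp only [alphaA]; split_ifs <;> omega)
  · by_cases h1 : a = i
    · subst h1; rw [if_pos rfl, if_pos rfl]
    · rw [if_neg h1, if_pos rfl]
      try (simp only [alphaA]; split_ifs <;> omega)
  · by_cases h1 : a = i
    · subst h1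
      rw [if_pos rfl]
      by_cases h2 : b = j
      · subst h2; rw [if_pos rfl]
        try (simp only [alphaA]; split_ifs <;> omega)
      · rw [if_neg h2]
        try (simp only [alphaA]; split_ifs <;> omega)
    · rw [if_neg h1]
      by_cases h2 : b = j
      · subst h2; rw [if_pos rfl]
        try (simp only [alphaA]; split_ifs <;> omega)
      · rw [if_neg h2]
        try (simp only [alphaA]; split_ifs <;> omega)


lemma epsA_eq (ℓ pos : ℕ) (h1 : 1 ≤ pos) (h2 : pos ≤ ℓ + 1) :
    epsA ℓ pos = EuclideanSpace.single (⟨pos - 1, by omega⟩ : Fin (ℓ+1)) 1 := by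
  rw [epsA, dif_pos ⟨h1, h2⟩]

lemma root_memA (ℓ x y : ℕ) (h1 : 1 ≤ x) (h2 : x ≤ ℓ + 1) (h3 : 1 ≤ y) (h4 : y ≤ ℓ + 1)
    (hxy : x ≠ y) : epsA ℓ x - epsA ℓ y ∈ RrootA ℓ := by
  refine ⟨⟨x - 1, by omega⟩, ⟨y - 1, by omega⟩, ?_, ?_⟩
  · simp only [ne_eq, Fin.mk.injEq]
    omega
  · rw [epsA_eq ℓ x h1 h2, epsA_eq ℓ y h3 h4]

lemma eps_inj (ℓ x y u v : ℕ) (hx1 : 1 ≤ x) (hx2 : x ≤ ℓ+1) (hy1 : 1 ≤ y) (hy2 : y ≤ ℓ+1)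
    (hu1 : 1 ≤ u) (hu2 : u ≤ ℓ+1) (hv1 : 1 ≤ v) (hv2 : v ≤ ℓ+1)
    (hxy : x ≠ y) (huv : u ≠ v)
    (h : epsA ℓ x - epsA ℓ y = epsA ℓ u - epsA ℓ v) : x = u ∧ y = v := by
  rw [epsA_eq ℓ x hx1 hx2, epsA_eq ℓ y hy1 hy2, epsA_eq ℓ u hu1 hu2, epsA_eq ℓ v hv1 hv2] at h
  have e1 := congrArg (fun f : EuclideanSpace ℝ (Fin (ℓ+1)) => f ⟨x - 1, by omega⟩) h
  have e2 := congrArg (fun f : EuclideanSpace ℝ (Fin (ℓ+1)) => f ⟨y - 1, by omega⟩) h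
  simp only [PiLp.sub_apply, EuclideanSpace.single_apply, Fin.mk.injEq] at e1 e2
  split_ifs at e1 e2 <;> norm_num at e1 <;> norm_num at e2 <;> omega


lemma prod_of_ext (ℓ : ℕ) (S : Set (ℕ × ℕ)) (hSrange : ∀ p ∈ S, 1 ≤ p.1 ∧ p.1 ≤ p.2 ∧ p.2 ≤ ℓ)
    (ξ : EuclideanSpace ℝ (Fin (ℓ + 1)))
    (hξ : {v | ∃ p ∈ S, v = epsA ℓ p.1 - epsA ℓ (p.2 + 1)} =
        {α | α ∈ RrootA ℓ ∧ ∀ β ∈ RrootA ℓ, ⟪ξ, β⟫ ≤ ⟪ξ, α⟫}) :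
    ∀ p ∈ S, ∀ q ∈ S, (p.1, q.2) ∈ S := by
  intro p hpS q hqS
  set xi : ℕ → ℝ := fun s => ⟪ξ, epsA ℓ s⟫ with hxi
  have hval : ∀ x y : ℕ, ⟪ξ, epsA ℓ x - epsA ℓ y⟫ = xi x - xi y := fun x y =>
    inner_sub_right ξ (epsA ℓ x) (epsA ℓ y)
  -- p is in the argmax set
  have hmem : ∀ r ∈ S, (epsA ℓ r.1 - epsA ℓ (r.2 + 1)) ∈
      {α | α ∈ RrootA ℓ ∧ ∀ β ∈ RrootA ℓ, ⟪ξ, β⟫ ≤ ⟪ξ, α⟫} := by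
    intro r hrS
    rw [← hξ]
    exact ⟨r, hrS, rfl⟩
  set M : ℝ := xi p.1 - xi (p.2 + 1) with hM
  have hmax : ∀ β ∈ RrootA ℓ, ⟪ξ, β⟫ ≤ M := by
    intro β hβ
    have := (hmem p hpS).2 β hβ
    rwa [hval] at this
  have hvalS : ∀ r ∈ S, xi r.1 - xi (r.2 + 1) = M := by
    intro r hrS
    have hr := hSrange r hrS
    have h1 : ⟪ξ, epsA ℓ r.1 - epsA ℓ (r.2+1)⟫ ≤ M :=
      hmax _ ((hmem r hrS).1)
    have h2 : M ≤ ⟪ξ, epsA ℓ r.1 - epsA ℓ (r.2+1)⟫ := by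
      have := (hmem r hrS).2 _ ((hmem p hpS).1)
      rwa [hval] at this
    rw [hval] at h1 h2
    linarith
  have hrngp := hSrange p hpS
  have hrngq := hSrange q hqS
  have hMpos : 0 < M := by
    by_contra hc
    push_neg at hc
    have hneg : (epsA ℓ (p.2+1) - epsA ℓ p.1) ∈ RrootA ℓ :=
      root_memA ℓ (p.2+1) p.1 (by omega) (by omega) (by omega) (by omega) (by omega)
    have h1 : ⟪ξ, epsA ℓ (p.2+1) - epsA ℓ p.1⟫ ≤ M := hmax _ hneg
    rw [hval] at h1
    have h2 : xi (p.2+1) - xi p.1 = M := by linarith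
    -- so the negative root is in the argmax set, hence in the S-set
    have hmem2 : (epsA ℓ (p.2+1) - epsA ℓ p.1) ∈
        {v | ∃ r ∈ S, v = epsA ℓ r.1 - epsA ℓ (r.2 + 1)} := by
      rw [hξ]
      refine ⟨hneg, ?_⟩
      intro β hβ
      rw [hval]
      calc ⟪ξ, β⟫ ≤ M := hmax β hβ
        _ = xi (p.2+1) - xi p.1 := h2.symm
    obtain ⟨r, hrS, hre⟩ := hmem2
    have hr := hSrange r hrS
    have := eps_inj ℓ (p.2+1) p.1 r.1 (r.2+1) (by omega) (by omega) (by omega) (by omega)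
      (by omega) (by omega) (by omega) (by omega) (by omega) (by omega) hre
    omega
  -- first: p.1 ≠ q.2 + 1
  have key : ∀ a b : ℕ, (a, b) ∈ S → ∀ c d : ℕ, (c, d) ∈ S → a ≠ d + 1 := by
    intro a b habS c d hcdS
    have hab := hSrange _ habS
    have hcd := hSrange _ hcdS
    have e1 : xi a - xi (b+1) = M := hvalS _ habS
    have e2 : xi c - xi (d+1) = M := hvalS _ hcdS
    intro hcontra
    by_cases hcb : c = b + 1
    · rw [hcontra] at e1
      rw [hcb] at e2
      linarith
    · -- root (c, b+1) has value 2M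
      have hroot : (epsA ℓ c - epsA ℓ (b+1)) ∈ RrootA ℓ :=
        root_memA ℓ c (b+1) (by omega) (by omega) (by omega) (by omega) hcb
      have := hmax _ hroot
      rw [hval] at this
      rw [hcontra] at e1
      -- e1 : xi (d+1) - xi (b+1) = M
      -- so  xi c - xi (b+1) = e2 + e1 = 2M
      linarith
  have hne1 : p.1 ≠ q.2 + 1 := key p.1 p.2 (by simpa using hpS) q.1 q.2 (by simpa using hqS)
  have hne2 : q.1 ≠ p.2 + 1 := key q.1 q.2 (by simpa using hqS) p.1 p.2 (by simpa using hpS)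
  -- the two cross roots
  have hroot1 : (epsA ℓ p.1 - epsA ℓ (q.2+1)) ∈ RrootA ℓ :=
    root_memA ℓ p.1 (q.2+1) (by omega) (by omega) (by omega) (by omega) hne1
  have hroot2 : (epsA ℓ q.1 - epsA ℓ (p.2+1)) ∈ RrootA ℓ :=
    root_memA ℓ q.1 (p.2+1) (by omega) (by omega) (by omega) (by omega) hne2
  have hv1 := hmax _ hroot1
  have hv2 := hmax _ hroot2
  rw [hval] at hv1 hv2
  have e1 : xi p.1 - xi (p.2+1) = M := hvalS _ hpS
  have e2 : xi q.1 - xi (q.2+1) = M := hvalS _ hqS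
  have hvmax : xi p.1 - xi (q.2+1) = M := by linarith
  have hmem3 : (epsA ℓ p.1 - epsA ℓ (q.2+1)) ∈
      {v | ∃ r ∈ S, v = epsA ℓ r.1 - epsA ℓ (r.2 + 1)} := by
    rw [hξ]
    refine ⟨hroot1, ?_⟩
    intro β hβ
    rw [hval, hvmax]
    exact hmax β hβ
  obtain ⟨r, hrS, hre⟩ := hmem3
  have hr := hSrange r hrS
  have hru := eps_inj ℓ p.1 (q.2+1) r.1 (r.2+1) (by omega) (by omega) (by omega) (by omega)
    (by omega) (by omega) (by omega) (by omega) hne1 (by omega) hre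
  have hr2 : r = (p.1, q.2) := by
    obtain ⟨hru1, hru2⟩ := hru
    apply Prod.ext
    · exact hru1.symm
    · omega
  rwa [← hr2]


section main
variable (ℓ : ℕ) (S : Set (ℕ × ℕ)) (hSrange : ∀ p ∈ S, 1 ≤ p.1 ∧ p.1 ≤ p.2 ∧ p.2 ≤ ℓ)
  (hprod : ∀ p ∈ S, ∀ q ∈ S, (p.1, q.2) ∈ S)
  (i j i' j' : ℕ) (hp : (i, j) ∈ S) (hq : (i', j') ∈ S)

include hSrange hprod hp hq

lemma Fsub : ∀ p ∈ FsetP i i' j j', p ∈ S := by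
  rintro ⟨a, b⟩ ⟨(rfl | rfl), (rfl | rfl)⟩
  · exact hp
  · exact hprod _ hp _ hq
  · exact hprod _ hq _ hp
  · exact hq

lemma alpha_inj : ∀ p ∈ FsetP i i' j j', ∀ p' ∈ FsetP i i' j j',
    (∀ t : Fin ℓ, alphaA ℓ p.1 p.2 t = alphaA ℓ p'.1 p'.2 t) → p = p' := by
  intro p hpm p' hpm' h
  have h1 := hSrange _ (Fsub ℓ S hSrange hprod i j i' j' hp hq p hpm)
  have h2 := hSrange _ (Fsub ℓ S hSrange hprod i j i' j' hp hq p' hpm')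
  have hcr1 := hSrange _ (hprod _ (Fsub ℓ S hSrange hprod i j i' j' hp hq p hpm) _
    (Fsub ℓ S hSrange hprod i j i' j' hp hq p' hpm'))
  have hcr2 := hSrange _ (hprod _ (Fsub ℓ S hSrange hprod i j i' j' hp hq p' hpm') _
    (Fsub ℓ S hSrange hprod i j i' j' hp hq p hpm))
  have := decomp_unique ℓ p.1 p.2 p.1 p.2 p'.1 p'.2 p'.1 p'.2
    h1.1 h1.2.1 h1.2.2 h1.1 h1.2.1 h1.2.2 h2.1 h2.2.1 h2.2.2 h2.1 h2.2.1 h2.2.2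
    h1.2.1 h1.2.1 hcr1.2.1 hcr1.2.1 hcr1.2.1 hcr1.2.1 hcr2.2.1 hcr2.2.1 hcr2.2.1 hcr2.2.1
    (fun t => by rw [h t])
  obtain ⟨hA, hB⟩ := this
  have : p.1 = p'.1 := by rcases hA with ⟨h, _⟩ | ⟨h, _⟩ <;> exact h
  have : p.2 = p'.2 := by rcases hB with ⟨h, _⟩ | ⟨h, _⟩ <;> exact h
  exact Prod.ext ‹p.1 = p'.1› ‹p.2 = p'.2›

variable (η : Fin ℓ → ℤ) (hη : ∀ t, η t = alphaA ℓ i j t + alphaA ℓ i' j' t)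
  (Ψv : Set (Fin ℓ → ℤ)) (hΨv : Ψv = {v | ∃ p ∈ S, v = alphaA ℓ p.1 p.2})

include hη hΨv

lemma mCount_eq : mCount ℓ Ψv η = (FsetP i i' j j').ncard := by
  classical
  have hFsub := Fsub ℓ S hSrange hprod i j i' j' hp hq
  -- decomposition uniqueness specialized
  have hdec : ∀ p ∈ S, ∀ q ∈ S,
      (∀ t : Fin ℓ, alphaA ℓ p.1 p.2 t + alphaA ℓ q.1 q.2 t = η t) →
      p ∈ FsetP i i' j j' ∧ q = compP i i' j j' p := by
    intro p hpS q hqS hsum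
    have h1 := hSrange _ hpS
    have h2 := hSrange _ hqS
    have h3 := hSrange _ hp
    have h4 := hSrange _ hq
    have c1 := (hSrange _ (hprod _ hpS _ hqS)).2.1
    have c2 := (hSrange _ (hprod _ hqS _ hpS)).2.1
    have c3 := (hSrange _ (hprod _ hpS _ hp)).2.1
    have c4 := (hSrange _ (hprod _ hpS _ hq)).2.1
    have c5 := (hSrange _ (hprod _ hqS _ hp)).2.1
    have c6 := (hSrange _ (hprod _ hqS _ hq)).2.1
    have c7 := (hSrange _ (hprod _ hp _ hpS)).2.1
    have c8 := (hSrange _ (hprod _ hp _ hqS)).2.1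
    have c9 := (hSrange _ (hprod _ hq _ hpS)).2.1
    have c10 := (hSrange _ (hprod _ hq _ hqS)).2.1
    have := decomp_unique ℓ p.1 p.2 q.1 q.2 i j i' j'
      h1.1 h1.2.1 h1.2.2 h2.1 h2.2.1 h2.2.2 h3.1 h3.2.1 h3.2.2 h4.1 h4.2.1 h4.2.2
      c1 c2 c3 c4 c5 c6 c7 c8 c9 c10
      (fun t => by rw [hsum t, hη t])
    obtain ⟨hA, hB⟩ := this
    constructor
    · constructor
      · rcases hA with ⟨h, _⟩ | ⟨h, _⟩ <;> [exact Or.inl h; exact Or.inr h]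
      · rcases hB with ⟨h, _⟩ | ⟨h, _⟩ <;> [exact Or.inl h; exact Or.inr h]
    · apply Prod.ext <;> simp only [compP]
      · split_ifs with h <;> rcases hA with ⟨e1, e2⟩ | ⟨e1, e2⟩ <;> omega
      · split_ifs with h <;> rcases hB with ⟨e1, e2⟩ | ⟨e1, e2⟩ <;> omega
  have himg : {bb : (Fin ℓ → ℤ) × (Fin ℓ → ℤ) | bb.1 ∈ Ψv ∧ bb.2 ∈ Ψv ∧ bb.1 + bb.2 = η}
      = (fun p : ℕ × ℕ => (alphaA ℓ p.1 p.2,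
          alphaA ℓ (compP i i' j j' p).1 (compP i i' j j' p).2)) '' (FsetP i i' j j') := by
    ext bb
    constructor
    · rintro ⟨hb1, hb2, hb3⟩
      rw [hΨv] at hb1 hb2
      obtain ⟨p, hpS, hbp⟩ := hb1
      obtain ⟨q, hqS, hbq⟩ := hb2
      have hsum : ∀ t : Fin ℓ, alphaA ℓ p.1 p.2 t + alphaA ℓ q.1 q.2 t = η t := by
        intro t
        have := congrFun hb3 t
        rw [Pi.add_apply, hbp, hbq] at this
        exact this
      obtain ⟨hpF, hqc⟩ := hdec p hpS q hqS hsum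
      refine ⟨p, hpF, ?_⟩
      show (alphaA ℓ p.1 p.2, alphaA ℓ (compP i i' j j' p).1 (compP i i' j j' p).2) = bb
      rw [← hqc, ← hbp, ← hbq]
    · rintro ⟨p, hpF, rfl⟩
      obtain ⟨h1, h2⟩ := hpF
      refine ⟨?_, ?_, ?_⟩
      · rw [hΨv]; exact ⟨p, hFsub p ⟨h1, h2⟩, rfl⟩
      · rw [hΨv]; exact ⟨compP i i' j j' p, hFsub _ (comp_mem i i' j j' p ⟨h1, h2⟩), rfl⟩
      · funext t
        rw [Pi.add_apply, hη t]
        exact sum_comp ℓ i i' j j' p.1 p.2 h1 h2 t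
  rw [mCount, himg, Nat.card_coe_set_eq]
  apply Set.ncard_image_of_injOn
  intro p hpm p' hpm' hEq
  apply alpha_inj ℓ S hSrange hprod i j i' j' hp hq p hpm p' hpm'
  intro t
  exact congrFun (congrArg Prod.fst hEq) t

lemma tCount_eq (lam : Fin ℓ → ℕ) :
    tCount ℓ S lam η
      = {p ∈ FsetP i i' j j' |
          CondP ℓ lam p.1 p.2 (compP i i' j j' p).1 (compP i i' j j' p).2}.ncard := by
  classical
  have hFsub := Fsub ℓ S hSrange hprod i j i' j' hp hq
  have hdec : ∀ p ∈ S, ∀ q ∈ S,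
      (∀ t : Fin ℓ, alphaA ℓ p.1 p.2 t + alphaA ℓ q.1 q.2 t = η t) →
      p ∈ FsetP i i' j j' ∧ q = compP i i' j j' p := by
    intro p hpS q hqS hsum
    have h1 := hSrange _ hpS
    have h2 := hSrange _ hqS
    have h3 := hSrange _ hp
    have h4 := hSrange _ hq
    have c1 := (hSrange _ (hprod _ hpS _ hqS)).2.1
    have c2 := (hSrange _ (hprod _ hqS _ hpS)).2.1
    have c3 := (hSrange _ (hprod _ hpS _ hp)).2.1
    have c4 := (hSrange _ (hprod _ hpS _ hq)).2.1
    have c5 := (hSrange _ (hprod _ hqS _ hp)).2.1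
    have c6 := (hSrange _ (hprod _ hqS _ hq)).2.1
    have c7 := (hSrange _ (hprod _ hp _ hpS)).2.1
    have c8 := (hSrange _ (hprod _ hp _ hqS)).2.1
    have c9 := (hSrange _ (hprod _ hq _ hpS)).2.1
    have c10 := (hSrange _ (hprod _ hq _ hqS)).2.1
    have := decomp_unique ℓ p.1 p.2 q.1 q.2 i j i' j'
      h1.1 h1.2.1 h1.2.2 h2.1 h2.2.1 h2.2.2 h3.1 h3.2.1 h3.2.2 h4.1 h4.2.1 h4.2.2
      c1 c2 c3 c4 c5 c6 c7 c8 c9 c10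
      (fun t => by rw [hsum t, hη t])
    obtain ⟨hA, hB⟩ := this
    constructor
    · constructor
      · rcases hA with ⟨h, _⟩ | ⟨h, _⟩ <;> [exact Or.inl h; exact Or.inr h]
      · rcases hB with ⟨h, _⟩ | ⟨h, _⟩ <;> [exact Or.inl h; exact Or.inr h]
    · apply Prod.ext <;> simp only [compP]
      · split_ifs with h <;> rcases hA with ⟨e1, e2⟩ | ⟨e1, e2⟩ <;> omega
      · split_ifs with h <;> rcases hB with ⟨e1, e2⟩ | ⟨e1, e2⟩ <;> omega
  have hmu_nonneg : ∀ a b : ℕ, (a, b) ∈ S → (∀ t : Fin ℓ, (t:ℕ)+2 = a → 1 ≤ lam t) →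
      (∀ t : Fin ℓ, (t:ℕ) = b → 1 ≤ lam t) →
      ∀ t : Fin ℓ, 0 ≤ (lam t : ℤ) + alphaA ℓ a b t := by
    intro a b hab c1 c2 t
    have hr := hSrange _ hab
    have hlb := alpha_lb ℓ a b hr.1 hr.2.1 hr.2.2 t
    rcases le_or_gt 0 (alphaA ℓ a b t) with h | h
    · positivity
    · rcases hlb.2 h with ht | ht
      · have := c1 t ht; omega
      · have := c2 t ht; omega
  have himg : {mu : Fin ℓ → ℕ | arrowA ℓ S lam mu ∧
        ∃ nu : Fin ℓ → ℕ, (∀ t, (nu t : ℤ) = (lam t : ℤ) + η t) ∧ arrowA ℓ S mu nu}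
      = (fun p : ℕ × ℕ => fun t : Fin ℓ => ((lam t : ℤ) + alphaA ℓ p.1 p.2 t).toNat) ''
          {p ∈ FsetP i i' j j' |
            CondP ℓ lam p.1 p.2 (compP i i' j j' p).1 (compP i i' j j' p).2} := by
    ext mu
    constructor
    · rintro ⟨⟨p, hpS, mueq, c1, c2⟩, nu, nueq, q, hqS, nueq2, c3, c4⟩
      have hsum : ∀ t : Fin ℓ, alphaA ℓ p.1 p.2 t + alphaA ℓ q.1 q.2 t = η t := by
        intro t
        have e1 := nueq t
        have e2 := nueq2 t
        have e3 := mueq t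
        linarith
      obtain ⟨hpF, hqc⟩ := hdec p hpS q hqS hsum
      refine ⟨p, ⟨hpF, c1, c2, ?_, ?_⟩, ?_⟩
      · intro t ht
        rw [← hqc] at ht
        have := c3 t ht
        have e3 := mueq t
        omega
      · intro t ht
        rw [← hqc] at ht
        have := c4 t ht
        have e3 := mueq t
        omega
      · funext t
        have e3 := mueq t
        simp only
        omega
    · rintro ⟨p, ⟨hpF, c1, c2, c3, c4⟩, rfl⟩
      have hpS := hFsub p hpF
      have hqF := comp_mem i i' j j' p hpF
      have hqS := hFsub _ hqF
      have h2 := hSrange _ hqS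
      have hq_lb := fun t => alpha_lb ℓ (compP i i' j j' p).1 (compP i i' j j' p).2
        h2.1 h2.2.1 h2.2.2 t
      have hsum : ∀ t : Fin ℓ, alphaA ℓ p.1 p.2 t
          + alphaA ℓ (compP i i' j j' p).1 (compP i i' j j' p).2 t = η t := by
        intro t
        rw [hη t]
        exact sum_comp ℓ i i' j j' p.1 p.2 hpF.1 hpF.2 t
      have hmn := hmu_nonneg p.1 p.2 (by rwa [Prod.mk.eta]) c1 c2
      have mueq : ∀ t : Fin ℓ, (((fun t : Fin ℓ => ((lam t : ℤ) + alphaA ℓ p.1 p.2 t).toNat) t : ℕ) : ℤ)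
          = (lam t : ℤ) + alphaA ℓ p.1 p.2 t := by
        intro t
        simp only
        rw [Int.toNat_of_nonneg (hmn t)]
      have hnn : ∀ t : Fin ℓ, 0 ≤ (lam t : ℤ) + η t := by
        intro t
        have e := hsum t
        rcases le_or_gt 0 (alphaA ℓ (compP i i' j j' p).1 (compP i i' j j' p).2 t) with h | h
        · have := hmn t; omega
        · rcases (hq_lb t).2 h with ht | ht
          · have := c3 t ht
            have := (hq_lb t).1
            omega
          · have := c4 t ht
            have := (hq_lb t).1
            omega
      refine ⟨⟨p, hpS, mueq, c1, c2⟩,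
        fun t => ((lam t : ℤ) + η t).toNat, ?_, ?_⟩
      · intro t
        simp only
        rw [Int.toNat_of_nonneg (hnn t)]
      · refine ⟨compP i i' j j' p, hqS, ?_, ?_, ?_⟩
        · intro t
          simp only
          rw [Int.toNat_of_nonneg (hnn t), Int.toNat_of_nonneg (hmn t)]
          have e := hsum t
          linarith
        · intro t ht
          have := c3 t ht
          simp only
          omega
        · intro t ht
          have := c4 t ht
          simp only
          omega
  rw [tCount, himg, Nat.card_coe_set_eq]
  apply Set.ncard_image_of_injOn
  intro p hpm p' hpm' hEq
  apply alpha_inj ℓ S hSrange hprod i j i' j' hp hq p hpm.1 p' hpm'.1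
  intro t
  have e := congrFun hEq t
  simp only at e
  have n1 := hmu_nonneg p.1 p.2 (by rw [Prod.mk.eta]; exact hFsub p hpm.1) hpm.2.1 hpm.2.2.1
  have n2 := hmu_nonneg p'.1 p'.2 (by rw [Prod.mk.eta]; exact hFsub p' hpm'.1) hpm'.2.1 hpm'.2.2.1
  have m1 := n1 t
  have m2 := n2 t
  omega

lemma cond_canon (lam : Fin ℓ → ℕ)
    (hadj1 : i' ≠ i + 1 ∧ i ≠ i' + 1) (hadj2 : j' ≠ j + 1 ∧ j ≠ j' + 1) :
    ∀ r ∈ FsetP i i' j j',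
      (CondP ℓ lam r.1 r.2 (compP i i' j j' r).1 (compP i i' j j' r).2 ↔
        XiP ℓ lam i i' j j') := by
  intro r hrF
  obtain ⟨h1, h2⟩ := hrF
  have hrS := Fsub ℓ S hSrange hprod i j i' j' hp hq r ⟨h1, h2⟩
  have hcF := comp_mem i i' j j' r ⟨h1, h2⟩
  have hcS := Fsub ℓ S hSrange hprod i j i' j' hp hq _ hcF
  have hr1 := hSrange _ hrS
  have hr2 := hSrange _ hcS
  have hcr1 := (hSrange _ (hprod _ hrS _ hcS)).2.1
  have hcr2 := (hSrange _ (hprod _ hcS _ hrS)).2.1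
  have n1 : r.1 ≠ (compP i i' j j' r).1 + 1 := by
    simp only [compP]
    split_ifs with hh <;> rcases h1 with e | e <;> omega
  have n2 : (compP i i' j j' r).1 ≠ r.1 + 1 := by
    simp only [compP]
    split_ifs with hh <;> rcases h1 with e | e <;> omega
  have n3 : r.2 ≠ (compP i i' j j' r).2 + 1 := by
    simp only [compP]
    split_ifs with hh <;> rcases h2 with e | e <;> omega
  have n4 : (compP i i' j j' r).2 ≠ r.2 + 1 := by
    simp only [compP]
    split_ifs with hh <;> rcases h2 with e | e <;> omega
  refine Iff.trans (cond_iff ℓ lam r.1 r.2 (compP i i' j j' r).1 (compP i i' j j' r).2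
    hr1.1 hr1.2.1 hr1.2.2 hr2.1 hr2.2.1 hr2.2.2 hcr1 hcr2 n1 n2 n3 n4) ?_
  by_cases hri : r.1 = i <;> by_cases hrj : r.2 = j
  · have hc : compP i i' j j' r = (i', j') := by
      simp only [compP, if_pos hri, if_pos hrj]
    rw [hc, hri, hrj]
  · have hrj' : r.2 = j' := by rcases h2 with e | e <;> [exact absurd e hrj; exact e]
    have hc : compP i i' j j' r = (i', j) := by
      simp only [compP, if_pos hri, if_neg hrj]
    rw [hc, hri, hrj']
    exact xi_swap2 ℓ lam i i' j' j
  · have hri' : r.1 = i' := by rcases h1 with e | e <;> [exact absurd e hri; exact e]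
    have hc : compP i i' j j' r = (i, j') := by
      simp only [compP, if_neg hri, if_pos hrj]
    rw [hc, hri', hrj]
    exact xi_swap1 ℓ lam i' i j j'
  · have hri' : r.1 = i' := by rcases h1 with e | e <;> [exact absurd e hri; exact e]
    have hrj' : r.2 = j' := by rcases h2 with e | e <;> [exact absurd e hrj; exact e]
    have hc : compP i i' j j' r = (i, j) := by
      simp only [compP, if_neg hri, if_neg hrj]
    rw [hc, hri', hrj']
    exact Iff.trans (xi_swap1 ℓ lam i' i j' j) (xi_swap2 ℓ lam i i' j' j)

end main


/-- an extremal set `Ψ ⊆ R⁺` of positive roots of type `A_ℓ`, encoded by the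
set `S` of index pairs `(i, j)` of the roots `α_{i,j} = ε_i − ε_{j+1} ∈ Ψ`, is regular iff
`(i,j), (i,k) ∈ S` with `j < k` implies `k > j + 1`, and `(i,k), (j,k) ∈ S` with `i < j`
implies `j > i + 1`. -/
theorem stmt_13 (ℓ : ℕ) (hℓ : 1 ≤ ℓ)
    (S : Set (ℕ × ℕ)) (hSrange : ∀ p ∈ S, 1 ≤ p.1 ∧ p.1 ≤ p.2 ∧ p.2 ≤ ℓ)
    (hext : ∃ ξ : EuclideanSpace ℝ (Fin (ℓ + 1)),
      {v | ∃ p ∈ S, v = epsA ℓ p.1 - epsA ℓ (p.2 + 1)} =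
        {α | α ∈ RrootA ℓ ∧ ∀ β ∈ RrootA ℓ, ⟪ξ, β⟫ ≤ ⟪ξ, α⟫})
    (Ψv : Set (Fin ℓ → ℤ)) (hΨv : Ψv = {v | ∃ p ∈ S, v = alphaA ℓ p.1 p.2}) :
    (∀ η : Fin ℓ → ℤ, (∃ v ∈ Ψv, ∃ w ∈ Ψv, η = v + w) →
        ∀ lam : Fin ℓ → ℕ, 0 < tCount ℓ S lam η → tCount ℓ S lam η = mCount ℓ Ψv η) ↔
      ((∀ i j k : ℕ, (i, j) ∈ S → (i, k) ∈ S → j < k → j + 1 < k) ∧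
        (∀ i j k : ℕ, (i, k) ∈ S → (j, k) ∈ S → i < j → i + 1 < j)) := by
  obtain ⟨ξ, hξ⟩ := hext
  have hprod : ∀ p ∈ S, ∀ q ∈ S, (p.1, q.2) ∈ S := prod_of_ext ℓ S hSrange ξ hξ
  constructor
  · -- regular → no adjacency
    intro hreg
    constructor
    · -- shared first index
      intro i j k hij hik hjk
      by_contra hc
      have hk : k = j + 1 := by omega
      have hrij := hSrange _ hij
      have hrik := hSrange _ hik
      simp only at hrij hrik
      set lam : Fin ℓ → ℕ := fun t => if (t : ℕ) = j then 0 else 2 with hlam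
      set η : Fin ℓ → ℤ := alphaA ℓ i j + alphaA ℓ i k with hηd
      have hη : ∀ t, η t = alphaA ℓ i j t + alphaA ℓ i k t := fun t => rfl
      have hT := tCount_eq ℓ S hSrange hprod i j i k hij hik η hη Ψv hΨv lam
      have hM := mCount_eq ℓ S hSrange hprod i j i k hij hik η hη Ψv hΨv
      have hF : FsetP i i j k = {(i, j), (i, k)} := by
        ext ⟨a, b⟩
        simp only [FsetP, Set.mem_setOf_eq, Set.mem_insert_iff, Set.mem_singleton_iff,
          Prod.mk.injEq]
        tauto
      have hcomp : compP i i j k (i, k) = (i, j) := by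
        simp [compP, (show ¬ (k = j) by omega)]
      have hCset : {p ∈ FsetP i i j k |
          CondP ℓ lam p.1 p.2 (compP i i j k p).1 (compP i i j k p).2} = {(i, k)} := by
        ext ⟨a, b⟩
        simp only [Set.mem_setOf_eq, Set.mem_singleton_iff, FsetP, Prod.mk.injEq]
        constructor
        · rintro ⟨⟨ha, hb⟩, hC⟩
          have ha' : a = i := by tauto
          rcases hb with rfl | rfl
          · exfalso
            have := hC.2.1 ⟨b, by omega⟩ (by simp)
            simp [hlam] at this
          · exact ⟨ha', rfl⟩
        · rintro ⟨rfl, rfl⟩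
          refine ⟨⟨Or.inl rfl, Or.inr rfl⟩, ?_⟩
          rw [hcomp]
          refine ⟨?_, ?_, ?_, ?_⟩
          · intro t ht
            simp only [hlam]
            split_ifs <;> omega
          · intro t ht
            simp only [hlam]
            split_ifs <;> omega
          · intro t ht
            simp only [hlam, alphaA, apply_ite (fun n : ℕ => (n : ℤ))]
            push_cast
            split_ifs <;> omega
          · intro t ht
            simp only [hlam, alphaA, apply_ite (fun n : ℕ => (n : ℤ))]
            push_cast
            split_ifs <;> omega
      have htpos : 0 < tCount ℓ S lam η := by
        rw [hT, hCset, Set.ncard_singleton]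
        omega
      have := hreg η ⟨alphaA ℓ i j, by rw [hΨv]; exact ⟨(i, j), hij, rfl⟩,
        alphaA ℓ i k, by rw [hΨv]; exact ⟨(i, k), hik, rfl⟩, rfl⟩ lam htpos
      rw [hT, hCset, hM, hF, Set.ncard_singleton,
        Set.ncard_pair (by simp only [ne_eq, Prod.mk.injEq]; omega)] at this
      omega
    · -- shared second index
      intro i j k hik hjk hij
      by_contra hc
      have hj : j = i + 1 := by omega
      have hrik := hSrange _ hik
      have hrjk := hSrange _ hjk
      simp only at hrik hrjk
      set lam : Fin ℓ → ℕ := fun t => if (t : ℕ) + 1 = i then 0 else 2 with hlam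
      set η : Fin ℓ → ℤ := alphaA ℓ i k + alphaA ℓ j k with hηd
      have hη : ∀ t, η t = alphaA ℓ i k t + alphaA ℓ j k t := fun t => rfl
      have hT := tCount_eq ℓ S hSrange hprod i k j k hik hjk η hη Ψv hΨv lam
      have hM := mCount_eq ℓ S hSrange hprod i k j k hik hjk η hη Ψv hΨv
      have hF : FsetP i j k k = {(i, k), (j, k)} := by
        ext ⟨a, b⟩
        simp only [FsetP, Set.mem_setOf_eq, Set.mem_insert_iff, Set.mem_singleton_iff,
          Prod.mk.injEq]
        tauto
      have hcomp : compP i j k k (i, k) = (j, k) := by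
        simp [compP]
      have hCset : {p ∈ FsetP i j k k |
          CondP ℓ lam p.1 p.2 (compP i j k k p).1 (compP i j k k p).2} = {(i, k)} := by
        ext ⟨a, b⟩
        simp only [Set.mem_setOf_eq, Set.mem_singleton_iff, FsetP, Prod.mk.injEq]
        constructor
        · rintro ⟨⟨ha, hb⟩, hC⟩
          have hb' : b = k := by tauto
          rcases ha with rfl | ha2
          · exact ⟨rfl, hb'⟩
          · exfalso
            have := hC.1 ⟨i - 1, by omega⟩ (by show i - 1 + 2 = a; omega)
            simp only [hlam] at this
            rw [if_pos (by show i - 1 + 1 = i; omega)] at this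
            omega
        · rintro ⟨rfl, rfl⟩
          refine ⟨⟨Or.inl rfl, Or.inr rfl⟩, ?_⟩
          rw [hcomp]
          refine ⟨?_, ?_, ?_, ?_⟩
          · intro t ht
            simp only [hlam]
            split_ifs <;> omega
          · intro t ht
            simp only [hlam]
            split_ifs <;> omega
          · intro t ht
            simp only [hlam, alphaA, apply_ite (fun n : ℕ => (n : ℤ))]
            push_cast
            split_ifs <;> omega
          · intro t ht
            simp only [hlam, alphaA, apply_ite (fun n : ℕ => (n : ℤ))]
            push_cast
            split_ifs <;> omega
      have htpos : 0 < tCount ℓ S lam η := by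
        rw [hT, hCset, Set.ncard_singleton]
        omega
      have := hreg η ⟨alphaA ℓ i k, by rw [hΨv]; exact ⟨(i, k), hik, rfl⟩,
        alphaA ℓ j k, by rw [hΨv]; exact ⟨(j, k), hjk, rfl⟩, rfl⟩ lam htpos
      rw [hT, hCset, hM, hF, Set.ncard_singleton,
        Set.ncard_pair (by simp only [ne_eq, Prod.mk.injEq]; omega)] at this
      omega
  · -- no adjacency → regular
    rintro ⟨h1cond, h2cond⟩ η ⟨v, hv, w, hw, hη0⟩ lam ht
    rw [hΨv] at hv hw
    obtain ⟨p, hpS, rfl⟩ := hv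
    obtain ⟨q, hqS, rfl⟩ := hw
    have hp : (p.1, p.2) ∈ S := by rwa [Prod.mk.eta]
    have hq : (q.1, q.2) ∈ S := by rwa [Prod.mk.eta]
    have hη : ∀ t, η t = alphaA ℓ p.1 p.2 t + alphaA ℓ q.1 q.2 t := by
      intro t
      rw [hη0]
      rfl
    have hT := tCount_eq ℓ S hSrange hprod p.1 p.2 q.1 q.2 hp hq η hη Ψv hΨv lam
    have hM := mCount_eq ℓ S hSrange hprod p.1 p.2 q.1 q.2 hp hq η hη Ψv hΨv
    have hadj1 : q.1 ≠ p.1 + 1 ∧ p.1 ≠ q.1 + 1 := by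
      have e1 : (p.1, p.2) ∈ S := hp
      have e2 : (q.1, p.2) ∈ S := hprod _ hq _ hp
      rcases lt_trichotomy p.1 q.1 with h | h | h
      · have := h2cond p.1 q.1 p.2 e1 e2 h
        omega
      · omega
      · have := h2cond q.1 p.1 p.2 e2 e1 h
        omega
    have hadj2 : q.2 ≠ p.2 + 1 ∧ p.2 ≠ q.2 + 1 := by
      have e1 : (p.1, p.2) ∈ S := hp
      have e2 : (p.1, q.2) ∈ S := hprod _ hp _ hq
      rcases lt_trichotomy p.2 q.2 with h | h | h
      · have := h1cond p.1 p.2 q.2 e1 e2 h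
        omega
      · omega
      · have := h1cond p.1 q.2 p.2 e2 e1 h
        omega
    rw [hT] at ht ⊢
    rw [hM]
    have hne : {r ∈ FsetP p.1 q.1 p.2 q.2 | CondP ℓ lam r.1 r.2
        (compP p.1 q.1 p.2 q.2 r).1 (compP p.1 q.1 p.2 q.2 r).2}.Nonempty :=
      Set.nonempty_of_ncard_ne_zero (by omega)
    obtain ⟨r0, hr0F, hr0C⟩ := hne
    have hXi : XiP ℓ lam p.1 q.1 p.2 q.2 :=
      (cond_canon ℓ S hSrange hprod p.1 p.2 q.1 q.2 hp hq η hη Ψv hΨv lam hadj1 hadj2 r0 hr0F).mp hr0C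
    congr 1
    apply Set.Subset.antisymm
    · exact Set.sep_subset _ _
    · intro r hrF
      exact ⟨hrF, (cond_canon ℓ S hSrange hprod p.1 p.2 q.1 q.2 hp hq η hη Ψv hΨv lam
        hadj1 hadj2 r hrF).mpr hXi⟩
end
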